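/- arXiv:1404.7536 — 3 statements merged into one kernel-verified Lean document; each statement's English description precedes it below -/
import Mathlib

section
/- Let (λ_n)_{n∈ℕ} be a sequence in [0,1] with Σ_{n∈ℕ} λ_n(1 − λ_n) = ∞, let T: H → H be nonexpansive with Fix T ≠ ∅, let x_0 and (e_n)_{n∈ℕ} be H-valued random variables, and define x_{n+1} = x_n + λ_n(T x_n + e_n − x_n) for every n ∈ ℕ. Assume Σ_{n∈ℕ} λ_n √(E[‖e_n‖² | 𝓧_n]) < ∞ P-a.s. Then (x_n)_{n∈ℕ} converges weakly P-almost surely to a (Fix T)-valued random variable. -/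
open MeasureTheory Filter Topology
open scoped RealInnerProductSpace

/-- The σ-algebra σ(x_0, …, x_n) generated by the first n+1 terms of a sequence of
random variables. -/
noncomputable def sigmaFinSeq {Ω H : Type*} [m : MeasurableSpace H]
    (x : ℕ → Ω → H) (n : ℕ) : MeasurableSpace Ω :=
  ⨆ i ∈ Set.Iic n, MeasurableSpace.comap (x i) m

/-- `p` is a weak sequential cluster point of the sequence `u`. -/
def IsWeakClusterPt {E : Type*} [NormedAddCommGroup E] [InnerProductSpace ℝ E]
    (p : E) (u : ℕ → E) : Prop :=
  ∃ k : ℕ → ℕ, StrictMono k ∧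
    ∀ y : E, Filter.Tendsto (fun j => (inner ℝ (u (k j)) y : ℝ)) Filter.atTop
      (nhds (inner ℝ p y : ℝ))

/-- `p` is a strong sequential cluster point of the sequence `u`. -/
def IsStrongClusterPt {E : Type*} [NormedAddCommGroup E] (p : E) (u : ℕ → E) : Prop :=
  ∃ k : ℕ → ℕ, StrictMono k ∧ Filter.Tendsto (fun j => u (k j)) Filter.atTop (nhds p)

/-- A nonnegative almost-decreasing sequence (up to summable errors) converges. -/
lemma exists_tendsto_of_quasi {a c : ℕ → ℝ} (ha : ∀ n, 0 ≤ a n) (hc : ∀ n, 0 ≤ c n)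
    (hcs : Summable c) (h : ∀ n, a (n + 1) ≤ a n + c n) :
    ∃ l, Tendsto a atTop (𝓝 l) := by
  set r : ℕ → ℝ := fun n => ∑' k, c (k + n) with hr
  have hrs : ∀ n, Summable fun k => c (k + n) := fun n => (summable_nat_add_iff n).2 hcs
  have hrec : ∀ n, r n = c n + r (n + 1) := by
    intro n
    have h0 := Summable.tsum_eq_zero_add (hrs n)
    simp only [zero_add] at h0
    simp only [hr]
    rw [h0]
    congr 1
    exact tsum_congr fun k => by ring_nf
  have hrnonneg : ∀ n, 0 ≤ r n := fun n => tsum_nonneg fun k => hc _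
  have hanti : Antitone fun n => a n + r n := antitone_nat_of_succ_le fun n => by
    have := h n
    have := hrec n
    nlinarith [hrnonneg (n+1)]
  have hbdd : BddBelow (Set.range fun n => a n + r n) := by
    refine ⟨0, fun z hz => ?_⟩
    obtain ⟨n, rfl⟩ := hz
    exact add_nonneg (ha n) (hrnonneg n)
  obtain ⟨l, hl⟩ : ∃ l, Tendsto (fun n => a n + r n) atTop (𝓝 l) :=
    ⟨_, tendsto_atTop_ciInf hanti hbdd⟩
  have hr0 : Tendsto r atTop (𝓝 0) := by
    have key : ∀ n, r n = (∑' k, c k) - ∑ k ∈ Finset.range n, c k := by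
      intro n
      have := Summable.sum_add_tsum_nat_add n hcs
      have h2 : ∑' (k : ℕ), c (k + n) = ∑' (k : ℕ), c (n + k) := tsum_congr fun k => by ring_nf
      simp only [hr]
      rw [h2]; linarith
    have hfe : r = fun n => (∑' k, c k) - ∑ k ∈ Finset.range n, c k := funext key
    rw [hfe]
    have := hcs.hasSum.tendsto_sum_nat
    have h3 := (tendsto_const_nhds (x := ∑' k, c k)).sub this
    simpa using h3
  refine ⟨l, ?_⟩
  have : Tendsto (fun n => a n + r n - r n) atTop (𝓝 (l - 0)) := hl.sub hr0
  simpa using this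

section WeakCompact

variable {H : Type*} [NormedAddCommGroup H] [InnerProductSpace ℝ H] [CompleteSpace H]
  [SecondCountableTopology H]

/-- Bounded sequences in a separable Hilbert space have weak cluster points. -/
lemma exists_isWeakClusterPt {u : ℕ → H} {M : ℝ} (hb : ∀ n, ‖u n‖ ≤ M) :
    ∃ p : H, IsWeakClusterPt p u := by
  have hM0 : 0 ≤ M := le_trans (norm_nonneg _) (hb 0)
  have : Nonempty H := ⟨0⟩
  obtain ⟨v, hv⟩ := TopologicalSpace.exists_dense_seq H
  -- the sequence of inner products lives in a compact product
  set S : Set (ℕ → ℝ) := Set.pi Set.univ fun i => Set.Icc (-(M * ‖v i‖)) (M * ‖v i‖) with hS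
  have hScpt : IsCompact S := isCompact_univ_pi fun i => isCompact_Icc
  have hmem : ∀ n, (fun i => ⟪u n, v i⟫) ∈ S := by
    intro n
    intro i _
    have := abs_real_inner_le_norm (u n) (v i)
    have h2 : ‖u n‖ * ‖v i‖ ≤ M * ‖v i‖ :=
      mul_le_mul_of_nonneg_right (hb n) (norm_nonneg _)
    constructor
    · nlinarith [abs_nonneg (⟪u n, v i⟫), neg_abs_le (⟪u n, v i⟫)]
    · nlinarith [le_abs_self (⟪u n, v i⟫)]
  obtain ⟨a, -, k, hk, hak⟩ := hScpt.tendsto_subseq hmem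
  have hcoord : ∀ i, Tendsto (fun j => ⟪u (k j), v i⟫) atTop (𝓝 (a i)) := by
    intro i
    have := (continuous_apply i).continuousAt.tendsto.comp hak
    exact this
  -- every inner product converges along the subsequence
  have hcauchy : ∀ y : H, ∃ l, Tendsto (fun j => ⟪u (k j), y⟫) atTop (𝓝 l) := by
    intro y
    refine cauchySeq_tendsto_of_complete ?_
    rw [Metric.cauchySeq_iff]
    intro ε hε
    obtain ⟨i, hi⟩ : ∃ i, ‖y - v i‖ < ε / (4 * (M + 1)) := by
      have hd : (0:ℝ) < ε / (4 * (M + 1)) := by positivity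
      obtain ⟨i, hi⟩ := Metric.denseRange_iff.1 hv y (ε / (4 * (M + 1))) hd
      exact ⟨i, by simpa [dist_eq_norm] using hi⟩
    obtain ⟨N, hN⟩ := (Metric.tendsto_atTop.1 (hcoord i)) (ε / 4) (by positivity)
    refine ⟨N, fun m hm n hn => ?_⟩
    have key : ∀ j, |⟪u (k j), y⟫ - ⟪u (k j), v i⟫| ≤ M * ‖y - v i‖ := by
      intro j
      have : ⟪u (k j), y⟫ - ⟪u (k j), v i⟫ = ⟪u (k j), y - v i⟫ := by
        rw [inner_sub_right]
      rw [this]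
      calc |⟪u (k j), y - v i⟫| ≤ ‖u (k j)‖ * ‖y - v i‖ := abs_real_inner_le_norm _ _
        _ ≤ M * ‖y - v i‖ := mul_le_mul_of_nonneg_right (hb _) (norm_nonneg _)
    have hd := (lt_div_iff₀ (by positivity : (0:ℝ) < 4 * (M + 1))).1 hi
    have hMd : M * ‖y - v i‖ < ε / 4 := by
      nlinarith [norm_nonneg (y - v i), hb 0, norm_nonneg (u 0)]
    have hdist : ∀ j, N ≤ j → |⟪u (k j), y⟫ - a i| < ε / 4 + ε / 4 := by
      intro j hj
      have h1 := key j
      have h2 := hN j hj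
      rw [Real.dist_eq] at h2
      have : |⟪u (k j), y⟫ - a i| ≤ |⟪u (k j), y⟫ - ⟪u (k j), v i⟫| + |⟪u (k j), v i⟫ - a i| := by
        have := abs_sub_abs_le_abs_sub (⟪u (k j), y⟫ - a i) 0
        calc |⟪u (k j), y⟫ - a i|
            = |(⟪u (k j), y⟫ - ⟪u (k j), v i⟫) + (⟪u (k j), v i⟫ - a i)| := by ring_nf
          _ ≤ _ := abs_add_le _ _
      linarith
    rw [Real.dist_eq]
    have hm' := hdist m hm
    have hn' := hdist n hn
    calc |⟪u (k m), y⟫ - ⟪u (k n), y⟫|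
        = |(⟪u (k m), y⟫ - a i) - (⟪u (k n), y⟫ - a i)| := by ring_nf
      _ ≤ |⟪u (k m), y⟫ - a i| + |⟪u (k n), y⟫ - a i| := abs_sub _ _
      _ < ε := by linarith
  -- build the weak limit via the Riesz representation
  choose g hg using hcauchy
  have hadd : ∀ y z, g (y + z) = g y + g z := by
    intro y z
    refine tendsto_nhds_unique (hg (y + z)) ?_
    have := (hg y).add (hg z)
    simpa [inner_add_right] using this
  have hsmul : ∀ (c : ℝ) (y : H), g (c • y) = c * g y := by
    intro c y
    refine tendsto_nhds_unique (hg (c • y)) ?_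
    have := (hg y).const_mul c
    simpa [real_inner_smul_right] using this
  have hbound : ∀ y, |g y| ≤ M * ‖y‖ := by
    intro y
    refine le_of_tendsto (hg y).abs (Eventually.of_forall fun j => ?_)
    calc |⟪u (k j), y⟫| ≤ ‖u (k j)‖ * ‖y‖ := abs_real_inner_le_norm _ _
      _ ≤ M * ‖y‖ := mul_le_mul_of_nonneg_right (hb _) (norm_nonneg _)
  let L : H →ₗ[ℝ] ℝ :=
    { toFun := g
      map_add' := hadd
      map_smul' := fun c y => by simpa using hsmul c y }
  let Lc : H →L[ℝ] ℝ := L.mkContinuous M fun y => by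
    simpa [Real.norm_eq_abs, L] using hbound y
  refine ⟨(InnerProductSpace.toDual ℝ H).symm Lc, k, hk, fun y => ?_⟩
  have : (inner ℝ ((InnerProductSpace.toDual ℝ H).symm Lc) y : ℝ) = Lc y :=
    InnerProductSpace.toDual_symm_apply
  rw [this]
  exact hg y

end WeakCompact

section Det

variable {H : Type*} [NormedAddCommGroup H] [InnerProductSpace ℝ H] [CompleteSpace H]
  [SecondCountableTopology H]

lemma norm_convex_combo (l : ℝ) (a b : H) :
    ‖(1 - l) • a + l • b‖ ^ 2
      = (1 - l) * ‖a‖ ^ 2 + l * ‖b‖ ^ 2 - l * (1 - l) * ‖a - b‖ ^ 2 := by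
  have h : ∀ w : H, ‖w‖ ^ 2 = ⟪w, w⟫ := fun w => (real_inner_self_eq_norm_sq w).symm
  simp only [h, inner_add_add_self, inner_sub_sub_self, real_inner_smul_left,
    real_inner_smul_right, real_inner_comm a b]
  ring

/-- Demiclosedness principle. -/
lemma fixed_of_weak {T : H → H} (hT : LipschitzWith 1 T) (w : ℕ → H) (p : H) (M : ℝ)
    (hconv : ∀ y : H, Tendsto (fun j => (⟪w j, y⟫ : ℝ)) atTop (𝓝 ⟪p, y⟫))
    (hd : Tendsto (fun j => ‖T (w j) - w j‖) atTop (𝓝 0))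
    (hb : ∀ j, ‖w j - p‖ ≤ M) : T p = p := by
  set d : ℕ → ℝ := fun j => ‖T (w j) - w j‖ with hdd
  have key : ∀ j, 2 * ⟪w j - p, p - T p⟫ + ‖p - T p‖ ^ 2 ≤ d j * (d j + 2 * M) := by
    intro j
    have h1 : ‖w j - T p‖ ^ 2 = ‖w j - p‖ ^ 2 + 2 * ⟪w j - p, p - T p⟫ + ‖p - T p‖ ^ 2 := by
      have : w j - T p = (w j - p) + (p - T p) := by abel
      rw [this, norm_add_sq_real]
    have h2 : ‖w j - T p‖ ≤ d j + ‖w j - p‖ := by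
      have hTT : ‖T (w j) - T p‖ ≤ ‖w j - p‖ := by
        have := hT.dist_le_mul (w j) p
        simpa [dist_eq_norm] using this
      calc ‖w j - T p‖ ≤ ‖w j - T (w j)‖ + ‖T (w j) - T p‖ := by
            have : w j - T p = (w j - T (w j)) + (T (w j) - T p) := by abel
            rw [this]; exact norm_add_le _ _
        _ ≤ d j + ‖w j - p‖ := by
            rw [hdd]; simp only [norm_sub_rev (w j) (T (w j))]
            exact add_le_add le_rfl hTT
    have hd0 : 0 ≤ d j := norm_nonneg _
    have h3 : ‖w j - T p‖ ^ 2 ≤ (d j + ‖w j - p‖) ^ 2 := by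
      have := norm_nonneg (w j - T p)
      nlinarith
    nlinarith [hb j, norm_nonneg (w j - p)]
  have hL : Tendsto (fun j => 2 * ⟪w j - p, p - T p⟫ + ‖p - T p‖ ^ 2) atTop
      (𝓝 (‖p - T p‖ ^ 2)) := by
    have h1 : Tendsto (fun j => (⟪w j - p, p - T p⟫ : ℝ)) atTop (𝓝 0) := by
      have := (hconv (p - T p)).sub (tendsto_const_nhds (x := (⟪p, p - T p⟫ : ℝ)))
      simp only [sub_self] at this
      convert this using 2 with j
      rw [inner_sub_left]
    have := (h1.const_mul 2).add (tendsto_const_nhds (x := ‖p - T p‖ ^ 2))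
    simpa using this
  have hR : Tendsto (fun j => d j * (d j + 2 * M)) atTop (𝓝 0) := by
    have := hd.mul (hd.add (tendsto_const_nhds (x := 2 * M)))
    simpa using this
  have hfin : ‖p - T p‖ ^ 2 ≤ 0 := le_of_tendsto_of_tendsto' hL hR key
  have : ‖p - T p‖ = 0 := by nlinarith [norm_nonneg (p - T p), sq_nonneg ‖p - T p‖]
  have := norm_eq_zero.1 this
  have := sub_eq_zero.1 this
  exact this.symm

theorem detKM (lam : ℕ → ℝ) (hlam : ∀ n, lam n ∈ Set.Icc (0 : ℝ) 1)
    (hlamdiv : ¬ Summable fun n => lam n * (1 - lam n))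
    (T : H → H) (hT : LipschitzWith 1 T) {p₀ : H} (hp₀ : T p₀ = p₀)
    (u ε : ℕ → H) (hrec : ∀ n, u (n + 1) = u n + lam n • (T (u n) + ε n - u n))
    (hsum : Summable fun n => lam n * ‖ε n‖) :
    ∃ p, T p = p ∧ ∀ y : H, Tendsto (fun n => (⟪u n, y⟫ : ℝ)) atTop (𝓝 ⟪p, y⟫) := by
  set c : ℕ → ℝ := fun n => lam n * ‖ε n‖ with hcc
  have hc0 : ∀ n, 0 ≤ c n := fun n => mul_nonneg (hlam n).1 (norm_nonneg _)
  set C : ℝ := ∑' n, c n with hCC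
  have hC0 : 0 ≤ C := tsum_nonneg hc0
  have hcC : ∀ n, c n ≤ C := fun n => Summable.le_tsum hsum n fun m _ => hc0 m
  have hdecomp : ∀ n (q : H),
      u (n + 1) - q = ((1 - lam n) • (u n - q) + lam n • (T (u n) - q)) + lam n • ε n := by
    intro n q
    rw [hrec n]
    simp only [smul_sub, smul_add, sub_smul, one_smul]
    abel
  have hnsmul : ∀ n, ‖lam n • ε n‖ = c n := by
    intro n
    rw [norm_smul, Real.norm_eq_abs, abs_of_nonneg (hlam n).1]
  have hconv_le : ∀ n (q : H), T q = q →
      ‖(1 - lam n) • (u n - q) + lam n • (T (u n) - q)‖ ≤ ‖u n - q‖ := by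
    intro n q hq
    have hTn : ‖T (u n) - q‖ ≤ ‖u n - q‖ := by
      have := hT.dist_le_mul (u n) q
      simpa [dist_eq_norm, hq] using this
    calc ‖(1 - lam n) • (u n - q) + lam n • (T (u n) - q)‖
        ≤ ‖(1 - lam n) • (u n - q)‖ + ‖lam n • (T (u n) - q)‖ := norm_add_le _ _
      _ = (1 - lam n) * ‖u n - q‖ + lam n * ‖T (u n) - q‖ := by
          rw [norm_smul, norm_smul, Real.norm_eq_abs, Real.norm_eq_abs,
            abs_of_nonneg (by linarith [(hlam n).2] : (0:ℝ) ≤ 1 - lam n),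
            abs_of_nonneg (hlam n).1]
      _ ≤ ‖u n - q‖ := by nlinarith [(hlam n).1, (hlam n).2, norm_nonneg (u n - q)]
  have step1 : ∀ (q : H), T q = q → ∀ n, ‖u (n + 1) - q‖ ≤ ‖u n - q‖ + c n := by
    intro q hq n
    rw [hdecomp n q]
    calc ‖_ + lam n • ε n‖ ≤ ‖(1 - lam n) • (u n - q) + lam n • (T (u n) - q)‖
          + ‖lam n • ε n‖ := norm_add_le _ _
      _ ≤ ‖u n - q‖ + c n := add_le_add (hconv_le n q hq) (hnsmul n).le
  -- boundedness
  have hbdd : ∀ n, ‖u n - p₀‖ ≤ ‖u 0 - p₀‖ + C := by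
    have haux : ∀ n, ‖u n - p₀‖ ≤ ‖u 0 - p₀‖ + ∑ k ∈ Finset.range n, c k := by
      intro n
      induction n with
      | zero => simp
      | succ m ih =>
          calc ‖u (m + 1) - p₀‖ ≤ ‖u m - p₀‖ + c m := step1 p₀ hp₀ m
            _ ≤ ‖u 0 - p₀‖ + ∑ k ∈ Finset.range m, c k + c m := by linarith
            _ = ‖u 0 - p₀‖ + ∑ k ∈ Finset.range (m + 1), c k := by
                rw [Finset.sum_range_succ]; ring
    intro n
    refine (haux n).trans (add_le_add le_rfl ?_)
    exact Summable.sum_le_tsum _ (fun m _ => hc0 m) hsum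
  set M : ℝ := ‖u 0 - p₀‖ + C with hMM
  have hM0 : 0 ≤ M := add_nonneg (norm_nonneg _) hC0
  have hub : ∀ n, ‖u n‖ ≤ M + ‖p₀‖ := by
    intro n
    calc ‖u n‖ = ‖(u n - p₀) + p₀‖ := by rw [sub_add_cancel]
      _ ≤ ‖u n - p₀‖ + ‖p₀‖ := norm_add_le _ _
      _ ≤ M + ‖p₀‖ := add_le_add (hbdd n) le_rfl
  set d : ℕ → ℝ := fun n => ‖T (u n) - u n‖ with hdd
  have hd0' : ∀ n, 0 ≤ d n := fun n => norm_nonneg _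
  -- the squared Fejér inequality
  have hsq : ∀ n, ‖u (n + 1) - p₀‖ ^ 2
      ≤ ‖u n - p₀‖ ^ 2 - lam n * (1 - lam n) * d n ^ 2 + c n * (2 * M + C) := by
    intro n
    set s : ℝ := ‖(1 - lam n) • (u n - p₀) + lam n • (T (u n) - p₀)‖ with hss
    have hs0 : 0 ≤ s := norm_nonneg _
    have hs2 : s ^ 2 = (1 - lam n) * ‖u n - p₀‖ ^ 2 + lam n * ‖T (u n) - p₀‖ ^ 2
        - lam n * (1 - lam n) * d n ^ 2 := by
      rw [hss, norm_convex_combo]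
      congr 2
      rw [hdd]
      simp only []
      rw [show u n - p₀ - (T (u n) - p₀) = u n - T (u n) by abel, norm_sub_rev]
    have hTn : ‖T (u n) - p₀‖ ≤ ‖u n - p₀‖ := by
      have := hT.dist_le_mul (u n) p₀
      simpa [dist_eq_norm, hp₀] using this
    have hsq' : ‖T (u n) - p₀‖ ^ 2 ≤ ‖u n - p₀‖ ^ 2 := by
      nlinarith [norm_nonneg (T (u n) - p₀), norm_nonneg (u n - p₀)]
    have hs2' : s ^ 2 ≤ ‖u n - p₀‖ ^ 2 - lam n * (1 - lam n) * d n ^ 2 := by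
      nlinarith [mul_nonneg (hlam n).1 (sub_nonneg.2 hsq')]
    have htr : ‖u (n + 1) - p₀‖ ≤ s + c n := by
      rw [hdecomp n p₀]
      calc ‖_ + lam n • ε n‖ ≤ s + ‖lam n • ε n‖ := norm_add_le _ _
        _ = s + c n := by rw [hnsmul n]
    have hsM : s ≤ M := by
      have h1 : s ≤ ‖u n - p₀‖ := hconv_le n p₀ hp₀
      exact h1.trans (hbdd n)
    have h4 : ‖u (n + 1) - p₀‖ ^ 2 ≤ (s + c n) ^ 2 := by
      nlinarith [norm_nonneg (u (n + 1) - p₀), hc0 n]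
    nlinarith [hc0 n, hcC n]
  -- summability of lam (1-lam) d²
  have hdsum : Summable fun n => lam n * (1 - lam n) * d n ^ 2 := by
    apply summable_of_sum_range_le
      (c := ‖u 0 - p₀‖ ^ 2 + (2 * M + C) * C)
    · intro n
      exact mul_nonneg (mul_nonneg (hlam n).1 (by linarith [(hlam n).2])) (sq_nonneg _)
    · intro N
      have key : ∀ N, ∑ n ∈ Finset.range N, lam n * (1 - lam n) * d n ^ 2
          ≤ ‖u 0 - p₀‖ ^ 2 - ‖u N - p₀‖ ^ 2
            + (2 * M + C) * ∑ n ∈ Finset.range N, c n := by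
        intro N
        induction N with
        | zero => simp
        | succ m ih =>
            rw [Finset.sum_range_succ, Finset.sum_range_succ]
            have := hsq m
            nlinarith
      have h2 : ∑ n ∈ Finset.range N, c n ≤ C :=
        Summable.sum_le_tsum _ (fun m _ => hc0 m) hsum
      have h3 := key N
      nlinarith [sq_nonneg ‖u N - p₀‖, hC0, hM0]
  -- d is almost decreasing
  have hd1 : ∀ n, d (n + 1) ≤ d n + 2 * c n := by
    intro n
    have h1 : ‖u (n + 1) - u n‖ ≤ lam n * d n + c n := by
      have : u (n + 1) - u n = lam n • (T (u n) - u n) + lam n • ε n := by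
        rw [hrec n]
        simp only [smul_sub, smul_add]
        abel
      rw [this]
      calc ‖lam n • (T (u n) - u n) + lam n • ε n‖
          ≤ ‖lam n • (T (u n) - u n)‖ + ‖lam n • ε n‖ := norm_add_le _ _
        _ ≤ lam n * d n + c n := by
            rw [norm_smul, Real.norm_eq_abs, abs_of_nonneg (hlam n).1, hnsmul n]
    have h2 : ‖T (u n) - u (n + 1)‖ ≤ (1 - lam n) * d n + c n := by
      have he : T (u n) - u (n + 1) = (1 - lam n) • (T (u n) - u n) - lam n • ε n := by
        rw [hrec n]
        simp only [smul_sub, smul_add, sub_smul, one_smul]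
        abel
      rw [he]
      calc ‖(1 - lam n) • (T (u n) - u n) - lam n • ε n‖
          ≤ ‖(1 - lam n) • (T (u n) - u n)‖ + ‖lam n • ε n‖ := norm_sub_le _ _
        _ ≤ (1 - lam n) * d n + c n := by
            rw [norm_smul, Real.norm_eq_abs,
              abs_of_nonneg (by linarith [(hlam n).2] : (0:ℝ) ≤ 1 - lam n), hnsmul n]
    have h3 : ‖T (u (n + 1)) - T (u n)‖ ≤ ‖u (n + 1) - u n‖ := by
      have := hT.dist_le_mul (u (n + 1)) (u n)
      simpa [dist_eq_norm] using this
    calc d (n + 1) = ‖T (u (n + 1)) - u (n + 1)‖ := rfl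
      _ ≤ ‖T (u (n + 1)) - T (u n)‖ + ‖T (u n) - u (n + 1)‖ := by
          rw [show T (u (n + 1)) - u (n + 1) = (T (u (n + 1)) - T (u n)) + (T (u n) - u (n + 1))
            by abel]
          exact norm_add_le _ _
      _ ≤ d n + 2 * c n := by linarith
  -- d → 0
  obtain ⟨δ, hδ⟩ := exists_tendsto_of_quasi hd0' (fun n => by linarith [hc0 n])
    (hsum.mul_left 2) hd1
  have hδ0 : 0 ≤ δ :=
    le_of_tendsto_of_tendsto' (tendsto_const_nhds (x := (0:ℝ))) hδ hd0'
  have hδeq : δ = 0 := by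
    by_contra hne
    have hpos : 0 < δ := lt_of_le_of_ne hδ0 (Ne.symm hne)
    have hev : ∀ᶠ n in atTop, δ / 2 ≤ d n :=
      hδ.eventually (eventually_ge_nhds (by linarith))
    obtain ⟨N, hN⟩ := hev.exists_forall_of_atTop
    apply hlamdiv
    rw [← summable_nat_add_iff N]
    have hcomp : ∀ n : ℕ, lam (n + N) * (1 - lam (n + N))
        ≤ (4 / δ ^ 2) * (lam (n + N) * (1 - lam (n + N)) * d (n + N) ^ 2) := by
      intro n
      have hdn := hN (n + N) (by omega)
      have h1 : δ / 2 * (δ / 2) ≤ d (n + N) * d (n + N) :=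
        mul_le_mul hdn hdn (by linarith) (hd0' _)
      have hl1 := (hlam (n + N)).1
      have hl2 := (hlam (n + N)).2
      have hll : 0 ≤ lam (n + N) * (1 - lam (n + N)) := by nlinarith
      have : 1 ≤ (4 / δ ^ 2) * d (n + N) ^ 2 := by
        rw [div_mul_eq_mul_div, le_div_iff₀ (by positivity)]
        nlinarith
      nlinarith
    refine Summable.of_nonneg_of_le (fun n => ?_) hcomp
      (((summable_nat_add_iff N).2 hdsum).mul_left (4 / δ ^ 2))
    have hl1 := (hlam (n + N)).1
    have hl2 := (hlam (n + N)).2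
    nlinarith
  rw [hδeq] at hδ
  -- limits of distances to fixed points
  have halim : ∀ q : H, T q = q → ∃ L, Tendsto (fun n => ‖u n - q‖) atTop (𝓝 L) :=
    fun q hq => exists_tendsto_of_quasi (fun n => norm_nonneg _) hc0 hsum (step1 q hq)
  -- weak cluster point
  obtain ⟨p, k, hk, hkconv⟩ := exists_isWeakClusterPt hub
  have hfixp : T p = p := by
    refine fixed_of_weak hT (fun j => u (k j)) p (M + ‖p₀‖ + ‖p‖) hkconv
      (hδ.comp hk.tendsto_atTop) fun j => ?_
    calc ‖u (k j) - p‖ ≤ ‖u (k j)‖ + ‖p‖ := norm_sub_le _ _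
      _ ≤ M + ‖p₀‖ + ‖p‖ := by linarith [hub (k j)]
  -- uniqueness of weak cluster points (Opial)
  have huniq : ∀ q : H, T q = q →
      (∃ k' : ℕ → ℕ, StrictMono k' ∧
        ∀ y : H, Tendsto (fun j => (⟪u (k' j), y⟫ : ℝ)) atTop (𝓝 ⟪q, y⟫)) → q = p := by
    rintro q hq ⟨k', hk', hk'conv⟩
    obtain ⟨Lp, hLp⟩ := halim p hfixp
    obtain ⟨Lq, hLq⟩ := halim q hq
    have h1 : ∀ n, (⟪u n, p - q⟫ : ℝ)
        = (‖u n - q‖ ^ 2 - ‖u n - p‖ ^ 2 - ‖q‖ ^ 2 + ‖p‖ ^ 2) / 2 := by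
      intro n
      have e1 := norm_sub_sq_real (u n) q
      have e2 := norm_sub_sq_real (u n) p
      rw [inner_sub_right]
      linarith
    have ht : Tendsto (fun n => (⟪u n, p - q⟫ : ℝ)) atTop
        (𝓝 ((Lq ^ 2 - Lp ^ 2 - ‖q‖ ^ 2 + ‖p‖ ^ 2) / 2)) := by
      simp only [h1]
      exact ((((hLq.pow 2).sub (hLp.pow 2)).sub tendsto_const_nhds).add
        tendsto_const_nhds).div_const 2
    have hval1 : (⟪p, p - q⟫ : ℝ) = (Lq ^ 2 - Lp ^ 2 - ‖q‖ ^ 2 + ‖p‖ ^ 2) / 2 :=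
      tendsto_nhds_unique (hkconv (p - q)) (ht.comp hk.tendsto_atTop)
    have hval2 : (⟪q, p - q⟫ : ℝ) = (Lq ^ 2 - Lp ^ 2 - ‖q‖ ^ 2 + ‖p‖ ^ 2) / 2 :=
      tendsto_nhds_unique (hk'conv (p - q)) (ht.comp hk'.tendsto_atTop)
    have : (⟪p - q, p - q⟫ : ℝ) = 0 := by
      rw [inner_sub_left]; rw [hval1, hval2]; ring
    have := inner_self_eq_zero.1 this
    have := sub_eq_zero.1 this
    exact this.symm
  refine ⟨p, hfixp, fun y => ?_⟩
  by_contra hy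
  rw [Metric.tendsto_atTop] at hy
  push_neg at hy
  obtain ⟨δ', hδ'pos, hfreq⟩ := hy
  have hfreq' : ∀ N : ℕ, ∃ n > N, δ' ≤ dist (⟪u n, y⟫ : ℝ) ⟪p, y⟫ := by
    intro N
    obtain ⟨n, hn, h⟩ := hfreq (N + 1)
    exact ⟨n, by omega, h⟩
  obtain ⟨k1, hk1, hk1p⟩ := Nat.exists_strictMono_subsequence hfreq'
  obtain ⟨q, k2, hk2, hk2conv⟩ := exists_isWeakClusterPt (u := fun j => u (k1 j))
    (fun j => hub (k1 j))
  have hfixq : T q = q := by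
    refine fixed_of_weak hT (fun j => u (k1 (k2 j))) q (M + ‖p₀‖ + ‖q‖) hk2conv
      (hδ.comp ((hk1.comp hk2).tendsto_atTop)) fun j => ?_
    calc ‖u (k1 (k2 j)) - q‖ ≤ ‖u (k1 (k2 j))‖ + ‖q‖ := norm_sub_le _ _
      _ ≤ M + ‖p₀‖ + ‖q‖ := by linarith [hub (k1 (k2 j))]
  have hqp : q = p := huniq q hfixq ⟨k1 ∘ k2, hk1.comp hk2, hk2conv⟩
  have hconv : Tendsto (fun j => (⟪u (k1 (k2 j)), y⟫ : ℝ)) atTop (𝓝 ⟪p, y⟫) := by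
    rw [← hqp]; exact hk2conv y
  obtain ⟨N, hN⟩ := Metric.tendsto_atTop.1 hconv δ' hδ'pos
  have h1 := hk1p (k2 N)
  have h2 := hN N le_rfl
  linarith

end Det

section Stoch

variable {Ω : Type*} {m0 : MeasurableSpace Ω} {P : Measure Ω} [IsProbabilityMeasure P]

/-- Conditional Cauchy–Schwarz: `E[f|m] ≤ √ E[f²|m]` for nonnegative `f`. -/
lemma condexp_le_sqrt_condexp_sq {m : MeasurableSpace Ω} {f : Ω → ℝ}
    (hf0 : ∀ ω, 0 ≤ f ω) (hfi : Integrable f P) (hf2 : Integrable (fun ω => f ω ^ 2) P) :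
    ∀ᵐ ω ∂P, (P[f|m]) ω ≤ Real.sqrt ((P[fun ω' => f ω' ^ 2|m]) ω) := by
  by_cases hm : m ≤ m0
  swap
  · simp only [condExp_of_not_le hm]
    exact Eventually.of_forall fun ω => by
      simp [Real.sqrt_nonneg]
  have hrat : ∀ q : ℚ, 0 < q → ∀ᵐ ω ∂P,
      (P[f|m]) ω ≤ (q : ℝ) / 2 + (P[fun ω' => f ω' ^ 2|m]) ω / (2 * q) := by
    intro q hq
    have hq0 : (0:ℝ) < (q:ℝ) := by exact_mod_cast hq
    have hptwise : f ≤ᵐ[P] fun ω => (q : ℝ) / 2 + f ω ^ 2 / (2 * q) := by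
      refine Eventually.of_forall fun ω => ?_
      show f ω ≤ (q : ℝ) / 2 + f ω ^ 2 / (2 * q)
      rw [← sub_nonneg]
      have he : (q : ℝ) / 2 + f ω ^ 2 / (2 * q) - f ω = (f ω - q) ^ 2 / (2 * q) := by
        field_simp
        ring
      rw [he]
      positivity
    have hgi : Integrable (fun ω => (q : ℝ) / 2 + f ω ^ 2 / (2 * q)) P :=
      (integrable_const _).add (hf2.div_const _)
    have h1 := condExp_mono (μ := P) (m := m) hfi hgi hptwise
    have h2 : P[fun ω => (q : ℝ) / 2 + f ω ^ 2 / (2 * q)|m]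
        =ᵐ[P] fun ω => (q : ℝ) / 2 + (P[fun ω' => f ω' ^ 2|m]) ω / (2 * q) := by
      have ha := condExp_add (μ := P) (m := m)
        (integrable_const ((q : ℝ) / 2)) (hf2.div_const (2 * q))
      have hb : P[fun ω => f ω ^ 2 / (2 * q)|m]
          =ᵐ[P] fun ω => (P[fun ω' => f ω' ^ 2|m]) ω / (2 * q) := by
        have hsm := condExp_smul (μ := P) (m := m) ((2 * (q:ℝ))⁻¹) (fun ω => f ω ^ 2)
        have he : (fun ω => f ω ^ 2 / (2 * (q:ℝ))) = (2 * (q:ℝ))⁻¹ • fun ω' => f ω' ^ 2 := by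
          funext ω
          simp [div_eq_inv_mul]
        rw [he]
        refine hsm.trans (Eventually.of_forall fun ω => ?_)
        simp [div_eq_inv_mul]
      calc P[fun ω => (q : ℝ) / 2 + f ω ^ 2 / (2 * q)|m]
          =ᵐ[P] P[fun _ => (q : ℝ) / 2|m] + P[fun ω => f ω ^ 2 / (2 * q)|m] := ha
        _ =ᵐ[P] fun ω => (q : ℝ) / 2 + (P[fun ω' => f ω' ^ 2|m]) ω / (2 * q) := by
            filter_upwards [hb] with ω hω
            simp only [Pi.add_apply, condExp_const hm, hω]
    filter_upwards [h1, h2] with ω hω1 hω2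
    rw [hω2] at hω1
    exact hω1
  have hallq : ∀ᵐ ω ∂P, ∀ q : ℚ, 0 < q →
      (P[f|m]) ω ≤ (q : ℝ) / 2 + (P[fun ω' => f ω' ^ 2|m]) ω / (2 * q) := by
    rw [ae_all_iff]
    intro q
    by_cases hq : 0 < q
    · exact (hrat q hq).mono fun ω h _ => h
    · exact Eventually.of_forall fun ω hq' => absurd hq' hq
  have h0 : ∀ᵐ ω ∂P, 0 ≤ (P[fun ω' => f ω' ^ 2|m]) ω :=
    condExp_nonneg (Eventually.of_forall fun ω => sq_nonneg _)
  filter_upwards [hallq, h0] with ω hω hY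
  set Y : ℝ := (P[fun ω' => f ω' ^ 2|m]) ω with hYY
  by_contra hcon
  push_neg at hcon
  obtain ⟨q, hq1, hq2⟩ := exists_rat_btwn hcon
  have hq0 : (0:ℝ) < (q:ℝ) := lt_of_le_of_lt (Real.sqrt_nonneg Y) hq1
  have hYq : Y < (q:ℝ) ^ 2 := Real.lt_sq_of_sqrt_lt hq1
  have := hω q (by exact_mod_cast hq0)
  have h5 : Y / (2 * q) ≤ (q:ℝ) / 2 := by
    rw [div_le_iff₀ (by positivity)]
    nlinarith
  linarith

/-- If conditional expectations are a.s. summably dominated, the variables are a.s. summable. -/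
lemma summable_of_summable_condexp
    (F : ℕ → MeasurableSpace Ω) (hF : ∀ n, F n ≤ m0) (hFmono : Monotone F)
    (Z g : ℕ → Ω → ℝ)
    (hZm : ∀ n, Measurable (Z n)) (hZ0 : ∀ n ω, 0 ≤ Z n ω) (hZi : ∀ n, Integrable (Z n) P)
    (hg0 : ∀ n ω, 0 ≤ g n ω) (hgi : ∀ n, Integrable (g n) P)
    (hgm : ∀ k, Measurable[F k] (g k))
    (hle : ∀ n, (P[Z n|F n]) ≤ᵐ[P] g n)
    (hgs : ∀ᵐ ω ∂P, Summable fun n => g n ω) :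
    ∀ᵐ ω ∂P, Summable fun n => Z n ω := by
  have key : ∀ c : ℕ, ∀ᵐ ω ∂P,
      (∀ n, ∑ k ∈ Finset.range (n + 1), g k ω ≤ c) → Summable fun n => Z n ω := by
    intro c
    set B : ℕ → Set Ω := fun n => {ω | ∑ k ∈ Finset.range (n + 1), g k ω ≤ c} with hBB
    have hBmeasF : ∀ n, MeasurableSet[F n] (B n) := by
      intro n
      have hsum : Measurable[F n] fun ω => ∑ k ∈ Finset.range (n + 1), g k ω := by
        apply Finset.measurable_sum
        intro k hk
        exact (hgm k).mono (hFmono (by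
          simp only [Finset.mem_range] at hk; omega : k ≤ n)) le_rfl
      exact hsum measurableSet_Iic
    have hBmeas : ∀ n, MeasurableSet (B n) := fun n => hF n _ (hBmeasF n)
    haveI : ∀ n, SigmaFinite (P.trim (hF n)) := fun n => by
      have : IsFiniteMeasure (P.trim (hF n)) := isFiniteMeasure_trim (hF n)
      infer_instance
    have h1 : ∀ n, ∫ ω in B n, Z n ω ∂P ≤ ∫ ω in B n, g n ω ∂P := by
      intro n
      rw [← setIntegral_condExp (hF n) (hZi n) (hBmeasF n)]
      exact setIntegral_mono_ae integrable_condExp.integrableOn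
        (hgi n).integrableOn (hle n)
    have hptwise : ∀ N ω, ∑ n ∈ Finset.range N, (B n).indicator (g n) ω ≤ (c : ℝ) := by
      intro N ω
      by_cases hS : ∃ k ∈ Finset.range N, ω ∈ B k
      · obtain ⟨m, hm⟩ := Finset.exists_max_image ((Finset.range N).filter fun k => ω ∈ B k)
          id (by
            obtain ⟨k, hk1, hk2⟩ := hS
            exact ⟨k, Finset.mem_filter.2 ⟨hk1, hk2⟩⟩)
        obtain ⟨hmmem, hmmax⟩ := hm
        rw [Finset.mem_filter] at hmmem
        calc ∑ n ∈ Finset.range N, (B n).indicator (g n) ω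
            = ∑ n ∈ (Finset.range N).filter (fun k => ω ∈ B k), g n ω := by
              rw [Finset.sum_filter]
              refine Finset.sum_congr rfl fun n _ => ?_
              by_cases hn : ω ∈ B n <;> simp [Set.indicator, hn]
          _ ≤ ∑ n ∈ Finset.range (m + 1), g n ω := by
              refine Finset.sum_le_sum_of_subset_of_nonneg ?_ fun i _ _ => hg0 i ω
              intro i hi
              rw [Finset.mem_filter] at hi
              have := hmmax i (Finset.mem_filter.2 hi)
              simp only [id] at this
              exact Finset.mem_range.2 (by omega)
          _ ≤ c := hmmem.2
      · push_neg at hS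
        have : ∀ n ∈ Finset.range N, (B n).indicator (g n) ω = 0 := by
          intro n hn
          simp [Set.indicator, hS n hn]
        rw [Finset.sum_congr rfl this]
        simp
    have h2 : ∀ N, ∑ n ∈ Finset.range N, ∫ ω in B n, g n ω ∂P ≤ (c : ℝ) := by
      intro N
      have e1 : ∀ n, ∫ ω in B n, g n ω ∂P = ∫ ω, (B n).indicator (g n) ω ∂P :=
        fun n => (integral_indicator (hBmeas n)).symm
      calc ∑ n ∈ Finset.range N, ∫ ω in B n, g n ω ∂P
          = ∫ ω, ∑ n ∈ Finset.range N, (B n).indicator (g n) ω ∂P := by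
            simp_rw [e1]
            rw [integral_finset_sum]
            exact fun n _ => (hgi n).indicator (hBmeas n)
        _ ≤ ∫ _ω, (c : ℝ) ∂P := by
            refine integral_mono (integrable_finset_sum _ fun n _ =>
              (hgi n).indicator (hBmeas n)) (integrable_const _) fun ω => hptwise N ω
        _ = c := by simp
    have h4 : ∑' n, ∫⁻ ω in B n, ENNReal.ofReal (Z n ω) ∂P ≤ ENNReal.ofReal (c : ℝ) := by
      refine ENNReal.tsum_le_of_sum_range_le fun N => ?_
      have e2 : ∀ n, ∫⁻ ω in B n, ENNReal.ofReal (Z n ω) ∂P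
          = ENNReal.ofReal (∫ ω in B n, Z n ω ∂P) := fun n =>
        (ofReal_integral_eq_lintegral_ofReal (hZi n).integrableOn
          (Eventually.of_forall fun ω => hZ0 n ω)).symm
      simp_rw [e2]
      rw [← ENNReal.ofReal_sum_of_nonneg
        (fun n _ => setIntegral_nonneg (hBmeas n) fun ω _ => hZ0 n ω)]
      refine ENNReal.ofReal_le_ofReal ?_
      calc ∑ n ∈ Finset.range N, ∫ ω in B n, Z n ω ∂P
          ≤ ∑ n ∈ Finset.range N, ∫ ω in B n, g n ω ∂P :=
            Finset.sum_le_sum fun n _ => h1 n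
        _ ≤ c := h2 N
    have h5 : ∫⁻ ω, ∑' n, (B n).indicator (fun ω' => ENNReal.ofReal (Z n ω')) ω ∂P
        ≤ ENNReal.ofReal (c : ℝ) := by
      rw [lintegral_tsum fun n => (((hZm n).ennreal_ofReal).indicator (hBmeas n)).aemeasurable]
      calc ∑' n, ∫⁻ ω, (B n).indicator (fun ω' => ENNReal.ofReal (Z n ω')) ω ∂P
          = ∑' n, ∫⁻ ω in B n, ENNReal.ofReal (Z n ω) ∂P := by
            refine tsum_congr fun n => ?_
            rw [lintegral_indicator (hBmeas n)]
        _ ≤ _ := h4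
    have h6 : ∀ᵐ ω ∂P, ∑' n, (B n).indicator (fun ω' => ENNReal.ofReal (Z n ω')) ω < ⊤ :=
      ae_lt_top (Measurable.ennreal_tsum fun n =>
        ((hZm n).ennreal_ofReal).indicator (hBmeas n))
        (lt_of_le_of_lt h5 ENNReal.ofReal_lt_top).ne
    filter_upwards [h6] with ω hω hc
    have hmem : ∀ n, ω ∈ B n := fun n => hc n
    have heq : ∀ n, (B n).indicator (fun ω' => ENNReal.ofReal (Z n ω')) ω
        = ENNReal.ofReal (Z n ω) := fun n => Set.indicator_of_mem (hmem n) _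
    rw [tsum_congr heq] at hω
    refine summable_of_sum_range_le (c := (∑' n, ENNReal.ofReal (Z n ω)).toReal)
      (fun n => hZ0 n ω) fun N => ?_
    have : ∑ n ∈ Finset.range N, Z n ω
        = (∑ n ∈ Finset.range N, ENNReal.ofReal (Z n ω)).toReal := by
      rw [ENNReal.toReal_sum (by intro n _; exact ENNReal.ofReal_ne_top)]
      exact Finset.sum_congr rfl fun n _ => (ENNReal.toReal_ofReal (hZ0 n ω)).symm
    rw [this]
    exact ENNReal.toReal_mono hω.ne (ENNReal.sum_le_tsum _)
  have hall : ∀ᵐ ω ∂P, ∀ c : ℕ,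
      (∀ n, ∑ k ∈ Finset.range (n + 1), g k ω ≤ c) → Summable fun n => Z n ω :=
    ae_all_iff.2 key
  filter_upwards [hall, hgs] with ω hω hsumg
  obtain ⟨c, hc⟩ := exists_nat_ge (∑' n, g n ω)
  refine hω c fun n => ?_
  calc ∑ k ∈ Finset.range (n + 1), g k ω ≤ ∑' k, g k ω :=
        Summable.sum_le_tsum _ (fun k _ => hg0 k ω) hsumg
    _ ≤ c := hc

end Stoch

open InnerProductSpace

section Proj

variable {H : Type*} [NormedAddCommGroup H] [InnerProductSpace ℝ H] [CompleteSpace H]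
  [SecondCountableTopology H]

/-- Partial orthogonal expansions along a Gram–Schmidt system of a dense sequence
converge to the point. -/
lemma proj_tendsto (v : ℕ → H) (hv : DenseRange v) (p : H) :
    Tendsto (fun N => ∑ i ∈ Finset.range N, ⟪p, gramSchmidtNormed ℝ v i⟫ • gramSchmidtNormed ℝ v i)
      atTop (𝓝 p) := by
  set b : ℕ → H := gramSchmidtNormed ℝ v with hbb
  have horth : ∀ i j, i ≠ j → (⟪b i, b j⟫ : ℝ) = 0 := by
    intro i j hij
    rw [hbb]
    simp only [gramSchmidtNormed, real_inner_smul_left, real_inner_smul_right]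
    rw [gramSchmidt_orthogonal ℝ v hij]
    ring
  have hnorm : ∀ i, b i = 0 ∨ ‖b i‖ = 1 := by
    intro i
    by_cases h : b i = 0
    · exact Or.inl h
    · exact Or.inr (gramSchmidtNormed_unit_length' h)
  have hspan : ∀ j, v j ∈ Submodule.span ℝ (b '' Set.Iic j) := by
    intro j
    rw [hbb, span_gramSchmidtNormed, span_gramSchmidt_Iic]
    exact Submodule.subset_span ⟨j, Set.self_mem_Iic, rfl⟩
  rw [Metric.tendsto_atTop]
  intro δ hδ
  obtain ⟨j, hj⟩ : ∃ j, ‖p - v j‖ < δ := by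
    obtain ⟨j, hj⟩ := Metric.denseRange_iff.1 hv p δ hδ
    exact ⟨j, by simpa [dist_eq_norm] using hj⟩
  refine ⟨j + 1, fun N hN => ?_⟩
  set PN : H := ∑ i ∈ Finset.range N, ⟪p, b i⟫ • b i with hPN
  have hKj : (Submodule.span ℝ (b '' Set.Iio N) : Set H) ⊇ (Submodule.span ℝ (b '' Set.Iic j)) := by
    apply Submodule.span_mono
    apply Set.image_mono
    intro i hi
    have h1 : i ≤ j := hi
    exact Set.mem_Iio.2 (lt_of_le_of_lt h1 (lt_of_lt_of_le (Nat.lt_succ_self j) hN))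
  have hPmem : PN ∈ Submodule.span ℝ (b '' Set.Iio N) := by
    refine Submodule.sum_mem _ fun i hi => Submodule.smul_mem _ _ (Submodule.subset_span ?_)
    exact ⟨i, Finset.mem_range.1 hi, rfl⟩
  have hOrthBase : ∀ i < N, (⟪p - PN, b i⟫ : ℝ) = 0 := by
    intro i hiN
    rw [inner_sub_left, hPN, sum_inner]
    have hterm : ∀ i' ∈ Finset.range N, (⟪(⟪p, b i'⟫ : ℝ) • b i', b i⟫ : ℝ)
        = if i' = i then (⟪p, b i⟫ : ℝ) * ‖b i‖ ^ 2 else 0 := by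
      intro i' _
      rw [real_inner_smul_left]
      by_cases h : i' = i
      · subst h
        rw [if_pos rfl, real_inner_self_eq_norm_sq]
      · rw [if_neg h, horth i' i h, mul_zero]
    rw [Finset.sum_congr rfl hterm, Finset.sum_ite_eq' (Finset.range N) i
      (fun _ => (⟪p, b i⟫ : ℝ) * ‖b i‖ ^ 2)]
    rw [if_pos (Finset.mem_range.2 hiN)]
    rcases hnorm i with h0 | h1
    · simp [h0]
    · rw [h1]; ring
  have hOrth : ∀ z ∈ Submodule.span ℝ (b '' Set.Iio N), (⟪p - PN, z⟫ : ℝ) = 0 := by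
    intro z hz
    induction hz using Submodule.span_induction with
    | mem z hz =>
        obtain ⟨i, hi, rfl⟩ := hz
        exact hOrthBase i hi
    | zero => exact inner_zero_right _
    | add z w _ _ hz hw => rw [inner_add_right, hz, hw, add_zero]
    | smul c z _ hz => rw [real_inner_smul_right, hz, mul_zero]
  have hle : ‖p - PN‖ ≤ ‖p - v j‖ := by
    have hw : v j ∈ Submodule.span ℝ (b '' Set.Iio N) := hKj (hspan j)
    have hsplit : p - v j = (p - PN) + (PN - v j) := by abel
    have hz : PN - v j ∈ Submodule.span ℝ (b '' Set.Iio N) := Submodule.sub_mem _ hPmem hw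
    have h2 : ‖p - v j‖ ^ 2 = ‖p - PN‖ ^ 2 + ‖PN - v j‖ ^ 2 := by
      rw [hsplit, norm_add_sq_real, hOrth _ hz]
      ring
    nlinarith [norm_nonneg (p - PN), norm_nonneg (p - v j), sq_nonneg ‖PN - v j‖]
  rw [dist_eq_norm, ← norm_sub_rev]
  calc ‖p - PN‖ ≤ ‖p - v j‖ := hle
    _ < δ := hj

end Proj

theorem krasnoselskii_mann_stochastic_weak_convergence
    {H : Type*} [NormedAddCommGroup H] [InnerProductSpace ℝ H] [CompleteSpace H]
    [SecondCountableTopology H] [MeasurableSpace H] [BorelSpace H]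
    {Ω : Type*} [MeasurableSpace Ω] (P : Measure Ω) [IsProbabilityMeasure P]
    (lam : ℕ → ℝ) (hlam : ∀ n, lam n ∈ Set.Icc (0 : ℝ) 1)
    (hlamdiv : ¬ Summable fun n => lam n * (1 - lam n))
    (T : H → H) (hT : LipschitzWith 1 T) (hFix : (Function.fixedPoints T).Nonempty)
    (x e : ℕ → Ω → H)
    (hxm : ∀ n, Measurable (x n)) (hem : ∀ n, Measurable (e n))
    (hrec : ∀ n, ∀ ω, x (n + 1) ω = x n ω + lam n • (T (x n ω) + e n ω - x n ω))
    (heint : ∀ n, Integrable (fun ω => ‖e n ω‖ ^ 2) P)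
    (hesum : ∀ᵐ ω ∂P, Summable fun n =>
      lam n * Real.sqrt ((P[fun ω' => ‖e n ω'‖ ^ 2 | sigmaFinSeq x n]) ω))
    :
    ∃ xlim : Ω → H, Measurable xlim ∧ (∀ᵐ ω ∂P, xlim ω ∈ Function.fixedPoints T) ∧
      ∀ᵐ ω ∂P, ∀ y : H,
        Tendsto (fun n => (inner ℝ (x n ω) y : ℝ)) atTop (𝓝 (inner ℝ (xlim ω) y : ℝ)) := by
  classical
  obtain ⟨p₀, hp₀⟩ := hFix
  have hp₀' : T p₀ = p₀ := hp₀
  set F : ℕ → MeasurableSpace Ω := sigmaFinSeq x with hFF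
  have hF_le : ∀ n, F n ≤ ‹MeasurableSpace Ω› := by
    intro n
    refine iSup₂_le fun i _ => (hxm i).comap_le
  have hFmono : Monotone F := by
    intro a b hab
    exact biSup_mono fun i hi => le_trans hi hab
  -- integrability of the error norms
  have heii : ∀ n, Integrable (fun ω => ‖e n ω‖) P := by
    intro n
    refine (((integrable_const (1:ℝ)).add (heint n)).div_const 2).mono'
      ((hem n).norm.aestronglyMeasurable) (Eventually.of_forall fun ω => ?_)
    rw [Real.norm_eq_abs, abs_of_nonneg (norm_nonneg _)]
    simp only [Pi.add_apply]
    nlinarith [sq_nonneg (‖e n ω‖ - 1)]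
  -- almost sure summability of the weighted error norms
  have hZsum : ∀ᵐ ω ∂P, Summable fun n => lam n * ‖e n ω‖ := by
    refine summable_of_summable_condexp F hF_le hFmono
      (fun n ω => lam n * ‖e n ω‖)
      (fun n ω => lam n * Real.sqrt ((P[fun ω' => ‖e n ω'‖ ^ 2|F n]) ω))
      (fun n => ((hem n).norm.const_mul _))
      (fun n ω => mul_nonneg (hlam n).1 (norm_nonneg _))
      (fun n => ((heii n).const_mul _))
      (fun n ω => mul_nonneg (hlam n).1 (Real.sqrt_nonneg _))
      ?_ ?_ ?_ hesum
    · -- integrability of the dominating sequence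
      intro n
      have hYi : Integrable (P[fun ω' => ‖e n ω'‖ ^ 2|F n]) P := integrable_condExp
      have hYm : Measurable (P[fun ω' => ‖e n ω'‖ ^ 2|F n]) :=
        (stronglyMeasurable_condExp.measurable).mono (hF_le n) le_rfl
      refine ((((integrable_const (1:ℝ)).add hYi.abs).div_const 2).const_mul
        (lam n)).mono' ((hYm.sqrt.const_mul _).aestronglyMeasurable)
        (Eventually.of_forall fun ω => ?_)
      set Y : ℝ := (P[fun ω' => ‖e n ω'‖ ^ 2|F n]) ω with hYY
      rw [Real.norm_eq_abs, abs_of_nonneg (mul_nonneg (hlam n).1 (Real.sqrt_nonneg _))]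
      have h1 : Real.sqrt Y ≤ (1 + |Y|) / 2 := by
        have h2 : Real.sqrt Y ≤ Real.sqrt |Y| := Real.sqrt_le_sqrt (le_abs_self Y)
        have h3 : Real.sqrt |Y| ^ 2 = |Y| := Real.sq_sqrt (abs_nonneg Y)
        nlinarith [Real.sqrt_nonneg |Y|, sq_nonneg (Real.sqrt |Y| - 1)]
      have := (hlam n).1
      simp only [Pi.add_apply]
      nlinarith
    · -- F n-measurability of the dominating sequence
      intro k
      exact ((stronglyMeasurable_condExp.measurable).sqrt.const_mul _)
    · -- conditional expectation bound
      intro n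
      have hCS := condexp_le_sqrt_condexp_sq (P := P) (m := F n)
        (f := fun ω => ‖e n ω‖) (fun ω => norm_nonneg _) (heii n) (heint n)
      have hsm : P[fun ω => lam n * ‖e n ω‖|F n]
          =ᵐ[P] fun ω => lam n * (P[fun ω' => ‖e n ω'‖|F n]) ω := by
        have he : (fun ω => lam n * ‖e n ω‖) = lam n • fun ω => ‖e n ω‖ := by
          funext ω; simp
        rw [he]
        refine (condExp_smul (μ := P) (m := F n) (lam n) _).trans
          (Eventually.of_forall fun ω => ?_)
        simp
      filter_upwards [hsm, hCS] with ω h1 h2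
      rw [h1]
      exact mul_le_mul_of_nonneg_left h2 (hlam n).1
  -- pathwise weak convergence to a fixed point
  have hgood : ∀ᵐ ω ∂P, ∃ p, T p = p ∧ ∀ y : H,
      Tendsto (fun n => (⟪x n ω, y⟫ : ℝ)) atTop (𝓝 ⟪p, y⟫) := by
    filter_upwards [hZsum] with ω hs
    exact detKM lam hlam hlamdiv T hT hp₀' (fun n => x n ω) (fun n => e n ω)
      (fun n => hrec n ω) hs
  set pfun : Ω → H := fun ω =>
    if h : ∃ p, T p = p ∧ ∀ y : H,
        Tendsto (fun n => (⟪x n ω, y⟫ : ℝ)) atTop (𝓝 ⟪p, y⟫)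
    then h.choose else 0 with hpfun_def
  have hpfun : ∀ᵐ ω ∂P, T (pfun ω) = pfun ω ∧ ∀ y : H,
      Tendsto (fun n => (⟪x n ω, y⟫ : ℝ)) atTop (𝓝 ⟪pfun ω, y⟫) := by
    filter_upwards [hgood] with ω h
    rw [hpfun_def]
    simp only [dif_pos h]
    exact h.choose_spec
  -- reconstruct the limit measurably
  have : Nonempty H := ⟨0⟩
  obtain ⟨v, hv⟩ := TopologicalSpace.exists_dense_seq H
  set b : ℕ → H := gramSchmidtNormed ℝ v with hbb
  have hC : ∀ i : ℕ, ∃ c : Ω → ℝ, Measurable c ∧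
      ∀ᵐ ω ∂P, Tendsto (fun n => (⟪x n ω, b i⟫ : ℝ)) atTop (𝓝 (c ω)) := by
    intro i
    refine measurable_limit_of_tendsto_metrizable_ae
      (fun n => ((hxm n).inner measurable_const).aemeasurable) ?_
    filter_upwards [hpfun] with ω h
    exact ⟨⟪pfun ω, b i⟫, h.2 (b i)⟩
  choose cfun hcm hct using hC
  have hceq : ∀ᵐ ω ∂P, ∀ i, cfun i ω = (⟪pfun ω, b i⟫ : ℝ) := by
    rw [ae_all_iff]
    intro i
    filter_upwards [hct i, hpfun] with ω h1 h2
    exact tendsto_nhds_unique h1 (h2.2 (b i))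
  have hgm : ∀ N, Measurable fun ω => ∑ i ∈ Finset.range N, cfun i ω • b i :=
    fun N => Finset.measurable_sum _ fun i _ => (hcm i).smul_const (b i)
  have hgconv : ∀ᵐ ω ∂P, Tendsto (fun N => ∑ i ∈ Finset.range N, cfun i ω • b i)
      atTop (𝓝 (pfun ω)) := by
    filter_upwards [hceq] with ω h
    have he : ∀ N, ∑ i ∈ Finset.range N, cfun i ω • b i
        = ∑ i ∈ Finset.range N, (⟪pfun ω, b i⟫ : ℝ) • b i := by
      intro N
      exact Finset.sum_congr rfl fun i _ => by rw [h i]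
    rw [funext he]
    exact proj_tendsto v hv (pfun ω)
  obtain ⟨xlim, hxlim_meas, hxlim_t⟩ := measurable_limit_of_tendsto_metrizable_ae
    (f := fun N ω => ∑ i ∈ Finset.range N, cfun i ω • b i) (L := atTop)
    (fun N => (hgm N).aemeasurable)
    (by filter_upwards [hgconv] with ω h; exact ⟨pfun ω, h⟩)
  have hxeq : ∀ᵐ ω ∂P, xlim ω = pfun ω := by
    filter_upwards [hgconv, hxlim_t] with ω h1 h2
    exact tendsto_nhds_unique h2 h1
  refine ⟨xlim, hxlim_meas, ?_, ?_⟩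
  · filter_upwards [hxeq, hpfun] with ω h1 h2
    rw [Function.mem_fixedPoints]
    show T (xlim ω) = xlim ω
    rw [h1]
    exact h2.1
  · filter_upwards [hxeq, hpfun] with ω h1 h2 y
    rw [h1]
    exact h2.2 y
end

section
/- Let (λ_n)_{n∈ℕ} be a sequence in [0,1] with Σ_{n∈ℕ} λ_n(1 − λ_n) = ∞, let T: H → H be nonexpansive with Fix T ≠ ∅ and demicompact at 0, let x_0 and (e_n)_{n∈ℕ} be H-valued random variables, and define x_{n+1} = x_n + λ_n(T x_n + e_n − x_n) for every n ∈ ℕ. Assume Σ_{n∈ℕ} λ_n √(E[‖e_n‖² | 𝓧_n]) < ∞ P-a.s. Then (x_n)_{n∈ℕ} converges strongly (in norm) P-almost surely to a (Fix T)-valued random variable. -/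
open MeasureTheory Filter Topology
open scoped RealInnerProductSpace

/-- `T` is demicompact at `y`: every bounded sequence `u` with `T (u n) - u n → y`
has a norm-convergent subsequence. -/
def DemicompactAt {E : Type*} [NormedAddCommGroup E] (T : E → E) (y : E) : Prop :=
  ∀ u : ℕ → E, (∃ C : ℝ, ∀ n, ‖u n‖ ≤ C) →
    Filter.Tendsto (fun n => T (u n) - u n) Filter.atTop (nhds y) →
    ∃ p : E, ∃ k : ℕ → ℕ, StrictMono k ∧
      Filter.Tendsto (fun j => u (k j)) Filter.atTop (nhds p)


/-- convergence of almost-decreasing sequences -/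
lemma quasi_fejer_conv (d eps : ℕ → ℝ) (hd : ∀ n, 0 ≤ d n) (heps : ∀ n, 0 ≤ eps n)
    (hsum : Summable eps) (hrec : ∀ n, d (n+1) ≤ d n + eps n) :
    ∃ l : ℝ, Tendsto d atTop (𝓝 l) := by
  set E : ℕ → ℝ := fun n => ∑ k ∈ Finset.range n, eps k with hE
  have hEle : ∀ n, E n ≤ ∑' k, eps k := fun n => Summable.sum_le_tsum _ (fun k _ => heps k) hsum
  set b : ℕ → ℝ := fun n => d n + (∑' k, eps k) - E n with hb
  have hanti : Antitone b := antitone_nat_of_succ_le (by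
    intro n
    have := hrec n
    have hEn : E (n+1) = E n + eps n := Finset.sum_range_succ _ _
    simp only [hb, hEn]; linarith)
  have hbdd : BddBelow (Set.range b) := by
    refine ⟨0, ?_⟩
    rintro _ ⟨n, rfl⟩
    have := hd n; have := hEle n
    simp only [hb]; linarith
  have h1 := tendsto_atTop_ciInf hanti hbdd
  have h2 : Tendsto E atTop (𝓝 (∑' k, eps k)) := hsum.hasSum.tendsto_sum_nat
  refine ⟨(⨅ n, b n) - ((∑' k, eps k) - (∑' k, eps k)) + 0, ?_⟩
  have : Tendsto (fun n => b n - ((∑' k, eps k) - E n)) atTop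
      (𝓝 ((⨅ n, b n) - ((∑' k, eps k) - (∑' k, eps k)))) := by
    exact h1.sub (tendsto_const_nhds.sub h2)
  simpa [hb] using this

lemma convex_norm_sq_identity {H : Type*} [NormedAddCommGroup H] [InnerProductSpace ℝ H]
    (t : ℝ) (a b : H) :
    ‖(1 - t) • a + t • b‖^2
      = (1-t)*‖a‖^2 + t*‖b‖^2 - t*(1-t)*‖a-b‖^2 := by
  have h1 : ‖(1 - t) • a + t • b‖^2 = ‖(1-t)•a‖^2 + 2*(inner ℝ ((1-t)•a) (t•b) : ℝ) + ‖t•b‖^2 :=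
    norm_add_sq_real _ _
  have h2 : ‖a - b‖^2 = ‖a‖^2 - 2*(inner ℝ a b : ℝ) + ‖b‖^2 := norm_sub_sq_real a b
  have h3 : (inner ℝ ((1-t)•a) (t•b) : ℝ) = (1-t)*t*(inner ℝ a b : ℝ) := by
    rw [real_inner_smul_left, real_inner_smul_right]; ring
  have h4 : ‖(1-t)•a‖^2 = (1-t)^2*‖a‖^2 := by
    rw [norm_smul, mul_pow, Real.norm_eq_abs, sq_abs]
  have h5 : ‖t•b‖^2 = t^2*‖b‖^2 := by
    rw [norm_smul, mul_pow, Real.norm_eq_abs, sq_abs]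
  rw [h1, h3, h4, h5]; nlinarith [h2]

lemma km_det {H : Type*} [NormedAddCommGroup H] [InnerProductSpace ℝ H]
    (lam : ℕ → ℝ) (hlam : ∀ n, lam n ∈ Set.Icc (0:ℝ) 1)
    (hlamdiv : ¬ Summable fun n => lam n * (1 - lam n))
    (T : H → H) (hT : LipschitzWith 1 T)
    (hdemi : DemicompactAt T 0)
    (x e : ℕ → H) (hrec : ∀ n, x (n+1) = x n + lam n • (T (x n) + e n - x n))
    (p0 : H) (hp0 : T p0 = p0)
    (hsum : Summable fun n => lam n * ‖e n‖) :
    ∃ p, T p = p ∧ Tendsto x atTop (𝓝 p) := by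
  set eps : ℕ → ℝ := fun n => lam n * ‖e n‖ with heps_def
  have heps : ∀ n, 0 ≤ eps n := fun n => mul_nonneg (hlam n).1 (norm_nonneg _)
  have hTne : ∀ u v : H, ‖T u - T v‖ ≤ ‖u - v‖ := by
    intro u v
    simpa [dist_eq_norm] using hT.dist_le_mul u v
  -- algebraic decomposition
  have hdecomp : ∀ p n, x (n+1) - p
      = ((1 - lam n) • (x n - p) + lam n • (T (x n) - p)) + lam n • e n := by
    intro p n
    rw [hrec n]
    module
  -- quasi-Fejer inequality
  have key : ∀ p, T p = p → ∀ n, ‖x (n+1) - p‖ ≤ ‖x n - p‖ + eps n := by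
    intro p hp n
    rw [hdecomp p n]
    have h1 : ‖(1 - lam n) • (x n - p) + lam n • (T (x n) - p)‖
        ≤ (1 - lam n) * ‖x n - p‖ + lam n * ‖x n - p‖ := by
      refine (norm_add_le _ _).trans ?_
      gcongr
      · rw [norm_smul, Real.norm_eq_abs, abs_of_nonneg (by linarith [(hlam n).2])]
      · rw [norm_smul, Real.norm_eq_abs, abs_of_nonneg (hlam n).1]
        have : ‖T (x n) - p‖ ≤ ‖x n - p‖ := by
          calc ‖T (x n) - p‖ = ‖T (x n) - T p‖ := by rw [hp]
            _ ≤ ‖x n - p‖ := hTne _ _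
        exact mul_le_mul_of_nonneg_left this (hlam n).1
    calc ‖(1 - lam n) • (x n - p) + lam n • (T (x n) - p) + lam n • e n‖
        ≤ ‖(1 - lam n) • (x n - p) + lam n • (T (x n) - p)‖ + ‖lam n • e n‖ := norm_add_le _ _
      _ ≤ ((1 - lam n) * ‖x n - p‖ + lam n * ‖x n - p‖)
            + lam n * ‖e n‖ := by
          gcongr
          rw [norm_smul, Real.norm_eq_abs, abs_of_nonneg (hlam n).1]
      _ = ‖x n - p‖ + eps n := by ring
  have hEtot : ∀ n, eps n ≤ ∑' k, eps k := fun n => Summable.le_tsum hsum n (fun m _ => heps m)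
  have hEtot0 : (0:ℝ) ≤ ∑' k, eps k := le_trans (heps 0) (hEtot 0)
  -- boundedness
  set B : ℝ := ‖x 0 - p0‖ + ∑' k, eps k with hB
  have hbd : ∀ n, ‖x n - p0‖ ≤ B := by
    have : ∀ n, ‖x n - p0‖ ≤ ‖x 0 - p0‖ + ∑ k ∈ Finset.range n, eps k := by
      intro n
      induction n with
      | zero => simp
      | succ m ih =>
        calc ‖x (m+1) - p0‖ ≤ ‖x m - p0‖ + eps m := key p0 hp0 m
          _ ≤ ‖x 0 - p0‖ + ∑ k ∈ Finset.range m, eps k + eps m := by linarith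
          _ = ‖x 0 - p0‖ + ∑ k ∈ Finset.range (m+1), eps k := by
              rw [Finset.sum_range_succ]; ring
    intro n
    refine (this n).trans ?_
    have := Summable.sum_le_tsum (Finset.range n) (fun k _ => heps k) hsum
    rw [hB]; linarith
  -- residuals
  set r : ℕ → ℝ := fun n => ‖T (x n) - x n‖ with hr_def
  -- sum of lam(1-lam) r^2 is finite
  have hsq : ∀ n, lam n * (1 - lam n) * r n ^ 2
      ≤ ‖x n - p0‖^2 - ‖x (n+1) - p0‖^2 + eps n * (2*B + ∑' k, eps k) := by
    intro n
    have hy : ‖(1 - lam n) • (x n - p0) + lam n • (T (x n) - p0)‖^2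
        = (1 - lam n)*‖x n - p0‖^2 + lam n*‖T (x n) - p0‖^2
          - lam n*(1 - lam n)*‖(x n - p0) - (T (x n) - p0)‖^2 :=
      convex_norm_sq_identity _ _ _
    have hTb : ‖T (x n) - p0‖ ≤ ‖x n - p0‖ := by
      calc ‖T (x n) - p0‖ = ‖T (x n) - T p0‖ := by rw [hp0]
        _ ≤ ‖x n - p0‖ := hTne _ _
    have hTb2 : ‖T (x n) - p0‖^2 ≤ ‖x n - p0‖^2 := by
      exact pow_le_pow_left₀ (norm_nonneg _) hTb 2
    have hab : ‖(x n - p0) - (T (x n) - p0)‖ = r n := by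
      rw [hr_def]; rw [show (x n - p0) - (T (x n) - p0) = -(T (x n) - x n) by abel, norm_neg]
    have hy2 : ‖(1 - lam n) • (x n - p0) + lam n • (T (x n) - p0)‖^2
        ≤ ‖x n - p0‖^2 - lam n*(1 - lam n)*r n^2 := by
      rw [hy, hab]
      nlinarith [(hlam n).1, (hlam n).2, hTb2]
    have hyb : ‖(1 - lam n) • (x n - p0) + lam n • (T (x n) - p0)‖ ≤ B := by
      calc ‖(1 - lam n) • (x n - p0) + lam n • (T (x n) - p0)‖
          ≤ ‖(1 - lam n) • (x n - p0)‖ + ‖lam n • (T (x n) - p0)‖ := norm_add_le _ _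
        _ ≤ (1 - lam n) * ‖x n - p0‖ + lam n * ‖x n - p0‖ := by
            gcongr
            · rw [norm_smul, Real.norm_eq_abs, abs_of_nonneg (by linarith [(hlam n).2])]
            · rw [norm_smul, Real.norm_eq_abs, abs_of_nonneg (hlam n).1]
              exact mul_le_mul_of_nonneg_left hTb (hlam n).1
        _ = ‖x n - p0‖ := by ring
        _ ≤ B := hbd n
    have hstep : ‖x (n+1) - p0‖
        ≤ ‖(1 - lam n) • (x n - p0) + lam n • (T (x n) - p0)‖ + eps n := by
      rw [hdecomp p0 n]
      refine (norm_add_le _ _).trans ?_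
      gcongr
      rw [norm_smul, Real.norm_eq_abs, abs_of_nonneg (hlam n).1]
    have h0 : (0:ℝ) ≤ ‖x (n+1) - p0‖ := norm_nonneg _
    nlinarith [hy2, hyb, hstep, heps n, hEtot n, norm_nonneg ((1 - lam n) • (x n - p0) + lam n • (T (x n) - p0))]
  have hsqsum : Summable fun n => lam n * (1 - lam n) * r n ^ 2 := by
    apply summable_of_sum_range_le
      (c := ‖x 0 - p0‖^2 + (∑' k, eps k) * (2*B + ∑' k, eps k))
    · intro n
      exact mul_nonneg (mul_nonneg (hlam n).1 (by linarith [(hlam n).2])) (sq_nonneg _)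
    · intro N
      have h1 : ∑ n ∈ Finset.range N, (lam n * (1 - lam n) * r n ^ 2)
          ≤ ∑ n ∈ Finset.range N, (‖x n - p0‖^2 - ‖x (n+1) - p0‖^2 + eps n * (2*B + ∑' k, eps k)) :=
        Finset.sum_le_sum fun n _ => hsq n
      have h2 : ∑ n ∈ Finset.range N, (‖x n - p0‖^2 - ‖x (n+1) - p0‖^2)
          = ‖x 0 - p0‖^2 - ‖x N - p0‖^2 := by
        rw [← Finset.sum_range_sub' (fun n => ‖x n - p0‖^2)]
      have h3 : ∑ n ∈ Finset.range N, eps n ≤ ∑' k, eps k :=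
        Summable.sum_le_tsum _ (fun k _ => heps k) hsum
      have hB0 : (0:ℝ) ≤ B := by rw [hB]; linarith [norm_nonneg (x 0 - p0)]
      have h4 : (0:ℝ) ≤ 2*B + ∑' k, eps k := by linarith
      rw [Finset.sum_add_distrib, h2, ← Finset.sum_mul] at h1
      have h5 : (∑ n ∈ Finset.range N, eps n) * (2*B + ∑' k, eps k)
          ≤ (∑' k, eps k) * (2*B + ∑' k, eps k) := mul_le_mul_of_nonneg_right h3 h4
      linarith [sq_nonneg ‖x N - p0‖, h1, h5]
  -- residuals converge
  have hrrec : ∀ n, r (n+1) ≤ r n + 2 * eps n := by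
    intro n
    have hxx : x (n+1) - x n = lam n • (T (x n) - x n) + lam n • e n := by
      rw [hrec n]; module
    have hTx : T (x n) - x (n+1) = (1 - lam n) • (T (x n) - x n) - lam n • e n := by
      rw [hrec n]; module
    have h1 : ‖T (x (n+1)) - T (x n)‖ ≤ lam n * r n + eps n := by
      refine (hTne _ _).trans ?_
      rw [hxx]
      refine (norm_add_le _ _).trans ?_
      rw [norm_smul, norm_smul, Real.norm_eq_abs, abs_of_nonneg (hlam n).1]
    have h2 : ‖T (x n) - x (n+1)‖ ≤ (1 - lam n) * r n + eps n := by
      rw [hTx]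
      refine (norm_sub_le _ _).trans ?_
      rw [norm_smul, norm_smul, Real.norm_eq_abs, Real.norm_eq_abs,
        abs_of_nonneg (hlam n).1, abs_of_nonneg (by linarith [(hlam n).2] : (0:ℝ) ≤ 1 - lam n)]
    calc r (n+1) = ‖(T (x (n+1)) - T (x n)) + (T (x n) - x (n+1))‖ := by
          rw [hr_def]; congr 1; abel
      _ ≤ ‖T (x (n+1)) - T (x n)‖ + ‖T (x n) - x (n+1)‖ := norm_add_le _ _
      _ ≤ r n + 2 * eps n := by linarith
  obtain ⟨rho, hrho⟩ := quasi_fejer_conv r (fun n => 2 * eps n)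
    (fun n => norm_nonneg _) (fun n => by simpa using mul_nonneg (by norm_num : (0:ℝ) ≤ 2) (heps n))
    (hsum.mul_left 2) hrrec
  have hrho0 : rho = 0 := by
    by_contra hne
    have hrhpos : 0 < rho := lt_of_le_of_ne (le_of_tendsto_of_tendsto' tendsto_const_nhds hrho
      (fun n => norm_nonneg _)) (Ne.symm hne)
    have hev : ∀ᶠ n in atTop, rho / 2 ≤ r n :=
      hrho.eventually (eventually_ge_nhds (by linarith : rho / 2 < rho))
    obtain ⟨N, hN⟩ := eventually_atTop.mp hev
    apply hlamdiv
    rw [← summable_nat_add_iff N]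
    apply Summable.of_nonneg_of_le
      (f := fun n => (4 / rho^2) * (lam (n+N) * (1 - lam (n+N)) * r (n+N) ^ 2))
    · intro n
      exact mul_nonneg (hlam _).1 (by linarith [(hlam (n+N)).2])
    · intro n
      have hL0 : 0 ≤ lam (n+N) * (1 - lam (n+N)) :=
        mul_nonneg (hlam _).1 (by linarith [(hlam (n+N)).2])
      have h1 : rho / 2 ≤ r (n+N) := hN _ (Nat.le_add_left N n)
      have h2 : rho^2 / 4 ≤ r (n+N)^2 := by nlinarith [norm_nonneg (T (x (n+N)) - x (n+N))]
      have hrp : (0:ℝ) < rho^2 := by positivity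
      calc lam (n+N) * (1 - lam (n+N))
          = (4/rho^2) * ((lam (n+N) * (1 - lam (n+N))) * (rho^2/4)) := by field_simp
        _ ≤ (4/rho^2) * ((lam (n+N) * (1 - lam (n+N))) * r (n+N)^2) := by
            exact mul_le_mul_of_nonneg_left (mul_le_mul_of_nonneg_left h2 hL0) (by positivity)
        _ = 4/rho^2 * (lam (n+N) * (1 - lam (n+N)) * r (n+N)^2) := by ring
    · exact ((summable_nat_add_iff N).mpr hsqsum).mul_left _
  rw [hrho0] at hrho
  have hTx0 : Tendsto (fun n => T (x n) - x n) atTop (𝓝 0) :=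
    tendsto_zero_iff_norm_tendsto_zero.mpr hrho
  obtain ⟨p, k, hk, hconv⟩ := hdemi x ⟨‖p0‖ + B, fun n => by
    calc ‖x n‖ = ‖(x n - p0) + p0‖ := by rw [sub_add_cancel]
      _ ≤ ‖x n - p0‖ + ‖p0‖ := norm_add_le _ _
      _ ≤ ‖p0‖ + B := by linarith [hbd n]⟩ hTx0
  have hTp : T p = p := by
    have h1 : Tendsto (fun j => T (x (k j)) - x (k j)) atTop (𝓝 (T p - p)) :=
      ((hT.continuous.tendsto p).comp hconv).sub hconv
    have h2 : Tendsto (fun j => T (x (k j)) - x (k j)) atTop (𝓝 0) :=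
      hTx0.comp hk.tendsto_atTop
    have := tendsto_nhds_unique h1 h2
    rwa [sub_eq_zero] at this
  refine ⟨p, hTp, ?_⟩
  obtain ⟨l, hl⟩ := quasi_fejer_conv (fun n => ‖x n - p‖) eps (fun n => norm_nonneg _)
    heps hsum (key p hTp)
  have hsub : Tendsto (fun j => ‖x (k j) - p‖) atTop (𝓝 0) := by
    have := (tendsto_iff_norm_sub_tendsto_zero).mp hconv
    exact this
  have hl0 : l = 0 := tendsto_nhds_unique (hl.comp hk.tendsto_atTop) hsub
  rw [hl0] at hl
  exact (tendsto_iff_norm_sub_tendsto_zero).mpr hl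


lemma real_le_mul_sqrt {L a g : ℝ} (hL : 0 ≤ L) (ha : 0 ≤ a)
    (h : ∀ q : ℚ, 0 < q → g ≤ (2*(q:ℝ))⁻¹ * (L^2 * a) + (q:ℝ)/2) :
    g ≤ L * Real.sqrt a := by
  by_contra hgt
  push_neg at hgt
  set t := L * Real.sqrt a with ht
  have ht0 : 0 ≤ t := mul_nonneg hL (Real.sqrt_nonneg a)
  have ht2 : t^2 = L^2 * a := by
    rw [ht, mul_pow, Real.sq_sqrt ha]
  obtain ⟨q, hq1, hq2⟩ := exists_rat_btwn hgt
  have hq0 : (0:ℝ) < q := lt_of_le_of_lt ht0 hq1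
  have hb := h q (by exact_mod_cast hq0)
  rw [← ht2] at hb
  have h2 : (2*(q:ℝ))⁻¹ * t^2 ≤ t/2 := by
    have he : (2*(q:ℝ))⁻¹ * t^2 - t/2 = (t^2 - t*q) / (2*q) := by
      field_simp
    have hle : (t^2 - t*q) / (2*(q:ℝ)) ≤ 0 :=
      div_nonpos_of_nonpos_of_nonneg (by nlinarith) (by linarith)
    linarith [he ▸ hle]
  linarith

lemma ae_summable_of_ae_summable_condexp {Ω : Type*} [inst : MeasurableSpace Ω]
    (P : Measure Ω) [IsProbabilityMeasure P]
    (m : ℕ → MeasurableSpace Ω) (hm : ∀ n, m n ≤ inst)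
    (hmono : Monotone m)
    (Z : ℕ → Ω → ℝ) (hZint : ∀ n, Integrable (Z n) P) (hZ0 : ∀ n ω, 0 ≤ Z n ω)
    (h : ∀ᵐ ω ∂P, Summable fun n => (P[Z n | m n]) ω) :
    ∀ᵐ ω ∂P, Summable fun n => Z n ω := by
  set g : ℕ → Ω → ℝ := fun n => P[Z n | m n] with hg
  set G : ℕ → Ω → ℝ := fun n ω => max (g n ω) 0 with hGdef
  have hGmeas : ∀ n, Measurable[m n] (G n) :=
    fun n => (stronglyMeasurable_condExp.measurable.max measurable_const)
  have hGeq : ∀ n, G n =ᵐ[P] g n := by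
    intro n
    filter_upwards [condExp_nonneg (μ := P) (m := m n)
      (Filter.Eventually.of_forall (hZ0 n))] with ω hω
    exact max_eq_left hω
  have hGint : ∀ n, Integrable (G n) P := fun n => (integrable_condExp (m := m n)).pos_part
  have hG0 : ∀ n ω, 0 ≤ G n ω := fun n ω => le_max_right _ _
  set A : ℕ → Ω → ℝ := fun N ω => ∑ k ∈ Finset.range N, G k ω with hA
  -- the stopped sets
  set S : ℝ → ℕ → Set Ω := fun c n => {ω | A (n+1) ω ≤ c} with hSdef
  have hSm : ∀ (c : ℝ) n, MeasurableSet[m n] (S c n) := by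
    intro c n
    have hAm : Measurable[m n] (A (n+1)) := by
      apply Finset.measurable_sum
      intro k hk
      have hk' : k ≤ n := Nat.lt_succ_iff.mp (Finset.mem_range.mp hk)
      exact (hGmeas k).mono (hmono hk') le_rfl
    exact measurableSet_le hAm measurable_const
  have hSamb : ∀ (c : ℝ) n, MeasurableSet (S c n) := fun c n => hm n _ (hSm c n)
  -- pointwise bound on stopped sums
  have hptwise : ∀ (c : ℝ), 0 ≤ c → ∀ ω N,
      (A N ω ≤ c → ∑ n ∈ Finset.range N, (S c n).indicator (G n) ω = A N ω) ∧
      ∑ n ∈ Finset.range N, (S c n).indicator (G n) ω ≤ c := by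
    intro c hc ω N
    induction N with
    | zero => simp [hA, hc]
    | succ N ih =>
      have hAmono : A N ω ≤ A (N+1) ω := by
        simp only [hA, Finset.sum_range_succ]; linarith [hG0 N ω]
      constructor
      · intro hle
        rw [Finset.sum_range_succ, (ih.1 (le_trans hAmono hle))]
        have hmem : ω ∈ S c N := hle
        rw [Set.indicator_of_mem hmem]
        simp only [hA, Finset.sum_range_succ]
      · by_cases hle : A (N+1) ω ≤ c
        · have hmem : ω ∈ S c N := hle
          rw [Finset.sum_range_succ, (ih.1 (le_trans hAmono hle)),
            Set.indicator_of_mem hmem]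
          have hA1 : A (N+1) ω = A N ω + G N ω := by
            simp only [hA, Finset.sum_range_succ]
          linarith
        · have hmem : ω ∉ S c N := hle
          rw [Finset.sum_range_succ, Set.indicator_of_notMem hmem]
          simpa using ih.2
  -- integral bound
  have hkey : ∀ (c : ℝ), 0 ≤ c → ∀ N,
      ∑ n ∈ Finset.range N, ∫ ω, (S c n).indicator (Z n) ω ∂P ≤ c := by
    intro c hc N
    have hstep : ∀ n, ∫ ω, (S c n).indicator (Z n) ω ∂P
        = ∫ ω, (S c n).indicator (G n) ω ∂P := by
      intro n
      rw [integral_indicator (hSamb c n), integral_indicator (hSamb c n)]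
      have h1 : ∫ ω in S c n, Z n ω ∂P = ∫ ω in S c n, g n ω ∂P :=
        (setIntegral_condExp (hm n) (hZint n) (hSm c n)).symm
      have h2 : ∫ ω in S c n, g n ω ∂P = ∫ ω in S c n, G n ω ∂P :=
        setIntegral_congr_ae (hSamb c n) ((hGeq n).symm.mono fun ω hω _ => hω)
      rw [h1, h2]
    calc ∑ n ∈ Finset.range N, ∫ ω, (S c n).indicator (Z n) ω ∂P
        = ∑ n ∈ Finset.range N, ∫ ω, (S c n).indicator (G n) ω ∂P := by
          exact Finset.sum_congr rfl fun n _ => hstep n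
      _ = ∫ ω, ∑ n ∈ Finset.range N, (S c n).indicator (G n) ω ∂P := by
          rw [integral_finset_sum]
          exact fun n _ => (hGint n).indicator (hSamb c n)
      _ ≤ ∫ (_ : Ω), c ∂P := by
          apply integral_mono _ (integrable_const c) (fun ω => (hptwise c hc ω N).2)
          apply integrable_finset_sum
          exact fun n _ => (hGint n).indicator (hSamb c n)
      _ = c := by simp
  -- lintegral bound and a.e. summability of the stopped series
  have hae : ∀ (c : ℕ), ∀ᵐ ω ∂P, Summable fun n => (S (c:ℝ) n).indicator (Z n) ω := by
    intro c
    set F : ℕ → Ω → ENNReal := fun n ω => ENNReal.ofReal ((S (c:ℝ) n).indicator (Z n) ω) with hF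
    have hFmeas : ∀ n, AEMeasurable (F n) P := fun n =>
      ENNReal.measurable_ofReal.comp_aemeasurable
        (((hZint n).aemeasurable).indicator (hSamb _ n))
    have hint : ∀ n, Integrable ((S (c:ℝ) n).indicator (Z n)) P :=
      fun n => (hZint n).indicator (hSamb _ n)
    have hnn : ∀ n, 0 ≤ᵐ[P] ((S (c:ℝ) n).indicator (Z n)) :=
      fun n => Filter.Eventually.of_forall fun ω => Set.indicator_nonneg (fun x _ => hZ0 n x) ω
    have hlin : ∫⁻ ω, ∑' n, F n ω ∂P ≤ ENNReal.ofReal c := by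
      rw [lintegral_tsum hFmeas]
      have heq : ∀ n, ∫⁻ ω, F n ω ∂P
          = ENNReal.ofReal (∫ ω, (S (c:ℝ) n).indicator (Z n) ω ∂P) :=
        fun n => (ofReal_integral_eq_lintegral_ofReal (hint n) (hnn n)).symm
      simp_rw [heq]
      rw [ENNReal.tsum_eq_iSup_nat]
      apply iSup_le
      intro N
      rw [← ENNReal.ofReal_sum_of_nonneg
        (fun n _ => integral_nonneg (Set.indicator_nonneg (fun x _ => hZ0 n x)))]
      exact ENNReal.ofReal_le_ofReal (hkey c (Nat.cast_nonneg c) N)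
    have hfin : ∀ᵐ ω ∂P, ∑' n, F n ω < ⊤ := by
      apply ae_lt_top' (AEMeasurable.ennreal_tsum hFmeas)
      exact ne_top_of_le_ne_top ENNReal.ofReal_ne_top hlin
    filter_upwards [hfin] with ω hω
    have hsum := ENNReal.summable_toReal hω.ne
    refine hsum.congr fun n => ?_
    exact ENNReal.toReal_ofReal (Set.indicator_nonneg (fun x _ => hZ0 n x) ω)
  -- conclude
  have hGsum : ∀ᵐ ω ∂P, Summable fun n => G n ω := by
    filter_upwards [h, ae_all_iff.mpr hGeq] with ω h1 h2
    exact h1.congr fun n => (h2 n).symm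
  filter_upwards [hGsum, ae_all_iff.mpr hae] with ω hGs hstop
  obtain ⟨c, hc⟩ := exists_nat_ge (∑' n, G n ω)
  have hAle : ∀ n, A (n+1) ω ≤ (c:ℝ) := by
    intro n
    refine le_trans ?_ hc
    exact Summable.sum_le_tsum (Finset.range (n+1)) (fun k _ => hG0 k ω) hGs
  refine (hstop c).congr fun n => ?_
  have hmem : ω ∈ S (c:ℝ) n := hAle n
  exact Set.indicator_of_mem hmem _

theorem krasnoselskii_mann_stochastic_strong_convergence
    {H : Type*} [NormedAddCommGroup H] [InnerProductSpace ℝ H] [CompleteSpace H]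
    [SecondCountableTopology H] [MeasurableSpace H] [BorelSpace H]
    {Ω : Type*} [MeasurableSpace Ω] (P : Measure Ω) [IsProbabilityMeasure P]
    (lam : ℕ → ℝ) (hlam : ∀ n, lam n ∈ Set.Icc (0 : ℝ) 1)
    (hlamdiv : ¬ Summable fun n => lam n * (1 - lam n))
    (T : H → H) (hT : LipschitzWith 1 T) (hFix : (Function.fixedPoints T).Nonempty)
    (x e : ℕ → Ω → H)
    (hxm : ∀ n, Measurable (x n)) (hem : ∀ n, Measurable (e n))
    (hrec : ∀ n, ∀ ω, x (n + 1) ω = x n ω + lam n • (T (x n ω) + e n ω - x n ω))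
    (heint : ∀ n, Integrable (fun ω => ‖e n ω‖ ^ 2) P)
    (hesum : ∀ᵐ ω ∂P, Summable fun n =>
      lam n * Real.sqrt ((P[fun ω' => ‖e n ω'‖ ^ 2 | sigmaFinSeq x n]) ω))
    (hdemi : DemicompactAt T 0) :
    ∃ xlim : Ω → H, Measurable xlim ∧ (∀ᵐ ω ∂P, xlim ω ∈ Function.fixedPoints T) ∧
      ∀ᵐ ω ∂P, Tendsto (fun n => x n ω) atTop (𝓝 (xlim ω)) := by
  classical
  set m : ℕ → MeasurableSpace Ω := fun n => sigmaFinSeq x n with hmdef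
  have hm : ∀ n, m n ≤ ‹MeasurableSpace Ω› := fun n =>
    iSup₂_le fun i _ => measurable_iff_comap_le.mp (hxm i)
  have hmono : Monotone m := fun a b hab =>
    biSup_mono (fun i (hi : i ∈ Set.Iic a) => le_trans hi hab)
  set Z : ℕ → Ω → ℝ := fun n ω => lam n * ‖e n ω‖ with hZdef
  have hZ0 : ∀ n ω, 0 ≤ Z n ω := fun n ω => mul_nonneg (hlam n).1 (norm_nonneg _)
  have henorm : ∀ n, Integrable (fun ω => ‖e n ω‖) P := by
    intro n
    refine Integrable.mono' ((heint n).add (integrable_const 1))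
      ((hem n).norm.aestronglyMeasurable) ?_
    refine Filter.Eventually.of_forall fun ω => ?_
    simp only [Pi.add_apply]
    rw [Real.norm_eq_abs, abs_of_nonneg (norm_nonneg _)]
    nlinarith [sq_nonneg (‖e n ω‖ - 1), norm_nonneg (e n ω)]
  have hZint : ∀ n, Integrable (Z n) P := fun n => (henorm n).const_mul _
  -- conditional Cauchy-Schwarz bound
  have hcs : ∀ n, ∀ᵐ ω ∂P, (P[Z n | m n]) ω
      ≤ lam n * Real.sqrt ((P[fun ω' => ‖e n ω'‖ ^ 2 | m n]) ω) := by
    intro n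
    have hc2nn : ∀ᵐ ω ∂P, 0 ≤ (P[fun ω' => ‖e n ω'‖ ^ 2 | m n]) ω :=
      condExp_nonneg (Filter.Eventually.of_forall fun ω => sq_nonneg _)
    have hq : ∀ q : ℚ, 0 < q → ∀ᵐ ω ∂P, (P[Z n | m n]) ω
        ≤ (2*(q:ℝ))⁻¹ * ((lam n)^2 * (P[fun ω' => ‖e n ω'‖ ^ 2 | m n]) ω) + (q:ℝ)/2 := by
      intro q hq0
      have hq0' : (0:ℝ) < (q:ℝ) := by exact_mod_cast hq0
      have hqne : (q:ℝ) ≠ 0 := ne_of_gt hq0'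
      set cc : ℝ := (2*(q:ℝ))⁻¹ * (lam n)^2 with hcc
      have hint2 : Integrable (fun ω => cc * ‖e n ω‖^2 + (q:ℝ)/2) P :=
        ((heint n).const_mul cc).add (integrable_const _)
      have hptw : ∀ ω, Z n ω ≤ cc * ‖e n ω‖^2 + (q:ℝ)/2 := by
        intro ω
        rw [← sub_nonneg]
        have hkey : cc * ‖e n ω‖^2 + (q:ℝ)/2 - Z n ω
            = (lam n * ‖e n ω‖ - (q:ℝ))^2 / (2*(q:ℝ)) := by
          simp only [hZdef, hcc]
          field_simp
          ring
        rw [hkey]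
        positivity
      have h1 := condExp_mono (μ := P) (m := m n) (hZint n) hint2
        (Filter.Eventually.of_forall hptw)
      have h2 : P[fun ω => cc * ‖e n ω‖^2 + (q:ℝ)/2 | m n]
          =ᵐ[P] fun ω => cc * (P[fun ω' => ‖e n ω'‖ ^ 2 | m n]) ω + (q:ℝ)/2 := by
        have ha : P[fun ω => cc * ‖e n ω‖^2 + (q:ℝ)/2 | m n]
            =ᵐ[P] P[fun ω => cc * ‖e n ω‖^2 | m n] + P[fun _ => (q:ℝ)/2 | m n] :=
          condExp_add ((heint n).const_mul cc) (integrable_const _) (m n)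
        have hs : P[fun ω => cc * ‖e n ω‖^2 | m n]
            =ᵐ[P] cc • P[fun ω' => ‖e n ω'‖^2 | m n] := by
          simpa [Pi.smul_def, smul_eq_mul] using
            condExp_smul (μ := P) (m := m n) cc (fun ω' => ‖e n ω'‖^2)
        have hcst : P[(fun _ => (q:ℝ)/2 : Ω → ℝ) | m n] = fun _ => (q:ℝ)/2 :=
          condExp_const (hm n) _
        filter_upwards [ha, hs] with ω hω1 hω2
        rw [hω1]
        simp only [Pi.add_apply, hcst, hω2, Pi.smul_apply, smul_eq_mul]
      filter_upwards [h1, h2] with ω hω1 hω2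
      calc (P[Z n|m n]) ω ≤ _ := hω1
        _ = cc * (P[fun ω' => ‖e n ω'‖ ^ 2 | m n]) ω + (q:ℝ)/2 := hω2
        _ = (2*(q:ℝ))⁻¹ * ((lam n)^2 * (P[fun ω' => ‖e n ω'‖ ^ 2 | m n]) ω) + (q:ℝ)/2 := by
            rw [hcc]; ring
    have hall : ∀ᵐ ω ∂P, ∀ q : ℚ, 0 < q → (P[Z n | m n]) ω
        ≤ (2*(q:ℝ))⁻¹ * ((lam n)^2 * (P[fun ω' => ‖e n ω'‖ ^ 2 | m n]) ω) + (q:ℝ)/2 := by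
      rw [ae_all_iff]
      intro q
      by_cases h0 : 0 < q
      · exact (hq q h0).mono fun ω hh _ => hh
      · exact Filter.Eventually.of_forall fun ω hh => absurd hh h0
    filter_upwards [hall, hc2nn] with ω hωq hωnn
    exact real_le_mul_sqrt (hlam n).1 hωnn (fun q hq0 => hωq q hq0)
  have hgsum : ∀ᵐ ω ∂P, Summable fun n => (P[Z n | m n]) ω := by
    have hgnn : ∀ᵐ ω ∂P, ∀ n, 0 ≤ (P[Z n|m n]) ω :=
      ae_all_iff.mpr fun n => condExp_nonneg (Filter.Eventually.of_forall (hZ0 n))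
    filter_upwards [hesum, ae_all_iff.mpr hcs, hgnn] with ω h1 h2 h3
    exact Summable.of_nonneg_of_le h3 h2 h1
  have hZsum := ae_summable_of_ae_summable_condexp P m hm hmono Z hZint hZ0 hgsum
  have htend : ∀ᵐ ω ∂P, ∃ p, T p = p ∧ Tendsto (fun n => x n ω) atTop (𝓝 p) := by
    obtain ⟨p0, hp0⟩ := hFix
    filter_upwards [hZsum] with ω hω
    exact km_det lam hlam hlamdiv T hT hdemi (fun n => x n ω) (fun n => e n ω)
      (fun n => hrec n ω) p0 hp0 hω
  have hex : ∀ᵐ ω ∂P, ∃ l, Tendsto (fun n => x n ω) atTop (𝓝 l) :=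
    htend.mono fun ω hω => hω.imp fun p hp => hp.2
  obtain ⟨xlim, hxlimm, hxlim⟩ := measurable_limit_of_tendsto_metrizable_ae
    (fun n => (hxm n).aemeasurable) hex
  refine ⟨xlim, hxlimm, ?_, hxlim⟩
  filter_upwards [htend, hxlim] with ω hω hl
  obtain ⟨p, hpfix, hp⟩ := hω
  have hxp : xlim ω = p := tendsto_nhds_unique hl hp
  rw [hxp]
  exact hpfix
end

section
/- Let φ: [0,∞) → [0,∞) be strictly increasing and let (ξ_n)_{n∈ℕ} be a bounded sequence in [0,∞) such that the sequence (φ(ξ_n))_{n∈ℕ} converges. Then (ξ_n)_{n∈ℕ} converges. -/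
open Filter Topology

theorem converges_of_strictMonoOn_image_converges
    (φ : ℝ → ℝ) (hφmono : StrictMonoOn φ (Set.Ici (0 : ℝ)))
    (hφnonneg : ∀ t, 0 ≤ t → 0 ≤ φ t)
    (ξ : ℕ → ℝ) (hξnonneg : ∀ n, 0 ≤ ξ n) (hξbdd : ∃ C : ℝ, ∀ n, ξ n ≤ C)
    (hconv : ∃ l : ℝ, Tendsto (fun n => φ (ξ n)) atTop (𝓝 l)) :
    ∃ l : ℝ, Tendsto ξ atTop (𝓝 l) := by
  obtain ⟨C, hC⟩ := hξbdd
  obtain ⟨l0, hl0⟩ := hconv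
  have hbdd_above : IsBoundedUnder (· ≤ ·) atTop ξ := isBoundedUnder_of ⟨C, hC⟩
  have hbdd_below : IsBoundedUnder (· ≥ ·) atTop ξ := isBoundedUnder_of ⟨0, hξnonneg⟩
  set A := liminf ξ atTop with hA
  set B := limsup ξ atTop with hB
  have hAB : A ≤ B := liminf_le_limsup hbdd_above hbdd_below
  have hA0 : 0 ≤ A := le_liminf_of_le hbdd_above.isCoboundedUnder_ge (Eventually.of_forall hξnonneg)
  have hBA : B ≤ A := by
    by_contra h
    push_neg at h
    set c : ℝ := A + (B - A) / 3 with hc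
    set c' : ℝ := B - (B - A) / 3 with hc'
    have hAc : A < c := by simp only [hc]; linarith
    have hcc' : c < c' := by simp only [hc, hc']; linarith
    have hc'B : c' < B := by simp only [hc']; linarith
    have hc0 : (0:ℝ) ≤ c := le_trans hA0 hAc.le
    have hc'0 : (0:ℝ) ≤ c' := le_trans hc0 hcc'.le
    have hfreq1 : ∃ᶠ n in atTop, ξ n < c := frequently_lt_of_liminf_lt hbdd_above.isCoboundedUnder_ge hAc
    have hfreq2 : ∃ᶠ n in atTop, c' < ξ n := frequently_lt_of_lt_limsup hbdd_below.isCoboundedUnder_le hc'B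
    have h1 : l0 ≤ φ c := by
      refine le_of_tendsto_of_frequently hl0 ?_
      exact hfreq1.mono fun n hn => (hφmono (hξnonneg n) hc0 hn).le
    have h2 : φ c' ≤ l0 := by
      refine ge_of_tendsto_of_frequently hl0 ?_
      exact hfreq2.mono fun n hn => (hφmono hc'0 (hξnonneg n) hn).le
    exact absurd (h2.trans h1) (not_le.mpr (hφmono hc0 hc'0 hcc'))
  have : A = B := le_antisymm hAB hBA
  exact ⟨A, tendsto_of_liminf_eq_limsup rfl this.symm hbdd_above hbdd_below⟩
end
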